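/- arXiv:0904.4304 — 5 statements merged into one kernel-verified Lean document; each statement's English description precedes it below -/
import Mathlib

section
/- Let T ∈ M_n(k') be an invertible hermitian matrix, x_T = [[T/2],[1_n]] ∈ M_{2n,n}(k') (upper n×n block T/2, lower block 1_n), and T̃ = [[1_n, T/2],[1_n, −T/2]] ∈ GL_{2n}(k') (n×n blocks). For g ∈ U(H_n), there exists h ∈ U(T) with g·x_T = x_T·h if and only if there exist h_1, h_2 ∈ U(T) such that g = T̃^{−1}·diag(h_1*, h_2*)·T̃ (block-diagonal with n×n blocks h_1* and h_2*). Consequently the stabilizer in U(H_n) of the coset x_T·U(T) equals {T̃^{−1} diag(h_1*, h_2*) T̃ : h_1, h_2 ∈ U(T)}. -/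
open Matrix
noncomputable section

/-- Conjugate transpose of a matrix with respect to an involution `conj` of the field. -/
def ctr {k' : Type} [Field k'] (conj : k' ≃+* k') {m l : Type} (A : Matrix m l k') :
    Matrix l m k' := fun i j => conj (A j i)

/-- The split hermitian form `H_n = [[0,1_n],[1_n,0]]`. -/
def Hmat (k' : Type) [Field k'] (n : ℕ) : Matrix (Fin n ⊕ Fin n) (Fin n ⊕ Fin n) k' :=
  Matrix.fromBlocks 0 1 1 0

/-- Membership in the unitary group `U(A)` of an hermitian matrix `A`. -/
def inU {k' : Type} [Field k'] (conj : k' ≃+* k') {m : Type} [Fintype m] [DecidableEq m]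
    (A : Matrix m m k') (g : Matrix m m k') : Prop :=
  ctr conj g * A * g = A ∧ IsUnit g.det

namespace StabAux

variable {k' : Type} [Field k'] {m l p q : Type}

lemma ctr_mul [Fintype l] (conj : k' ≃+* k') (A : Matrix m l k') (B : Matrix l p k') :
    ctr conj (A * B) = ctr conj B * ctr conj A := by
  ext i j
  simp only [ctr, Matrix.mul_apply]
  rw [map_sum]
  exact Finset.sum_congr rfl fun t _ => by rw [conj.map_mul]; exact mul_comm _ _

lemma ctr_ctr (conj : k' ≃+* k') (hinvol : ∀ a, conj (conj a) = a) (A : Matrix m l k') :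
    ctr conj (ctr conj A) = A := by
  ext i j; simp [ctr, hinvol]

lemma ctr_one [DecidableEq m] (conj : k' ≃+* k') : ctr conj (1 : Matrix m m k') = 1 := by
  ext i j
  rcases eq_or_ne i j with h | h
  · subst h; simp [ctr, Matrix.one_apply]
  · simp [ctr, Matrix.one_apply, h, h.symm]

lemma ctr_zero (conj : k' ≃+* k') : ctr conj (0 : Matrix m l k') = 0 := by
  ext i j; simp [ctr]

lemma ctr_neg (conj : k' ≃+* k') (A : Matrix m l k') : ctr conj (-A) = -(ctr conj A) := by
  ext i j; simp [ctr]

lemma ctr_smul (conj : k' ≃+* k') (c : k') (A : Matrix m l k') :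
    ctr conj (c • A) = conj c • ctr conj A := by
  ext i j; simp [ctr, Matrix.smul_apply, smul_eq_mul]

lemma ctr_fromBlocks (conj : k' ≃+* k') (A : Matrix m l k') (B : Matrix m p k')
    (C : Matrix q l k') (D : Matrix q p k') :
    ctr conj (fromBlocks A B C D) = fromBlocks (ctr conj A) (ctr conj C) (ctr conj B) (ctr conj D) := by
  ext (i | i) (j | j) <;> rfl

lemma det_ctr [Fintype m] [DecidableEq m] (conj : k' ≃+* k') (A : Matrix m m k') :
    (ctr conj A).det = conj A.det := by
  have h : ctr conj A = ((conj : k' →+* k').mapMatrix A)ᵀ := rfl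
  rw [h, det_transpose, ← RingHom.map_det]
  rfl

lemma isUnit_det_ctr [Fintype m] [DecidableEq m] (conj : k' ≃+* k') (A : Matrix m m k')
    (h : IsUnit A.det) : IsUnit (ctr conj A).det := by
  rw [det_ctr]; exact h.map (conj : k' →+* k')

variable [CharZero k']

lemma conj_half (conj : k' ≃+* k') : conj ((2 : k')⁻¹) = (2 : k')⁻¹ := by
  have h2 : conj (2 : k') = 2 := by
    rw [show (2 : k') = 1 + 1 by norm_num, conj.map_add, conj.map_one]
  rw [map_inv₀, h2]

section Main

variable (conj : k' ≃+* k') {n : ℕ} (T : Matrix (Fin n) (Fin n) k')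

lemma half_add_half (A : Matrix m l k') : (2 : k')⁻¹ • A + (2 : k')⁻¹ • A = A := by
  rw [← add_smul]; norm_num

/-- explicit inverse of Ttil -/
def TtilInv : Matrix (Fin n ⊕ Fin n) (Fin n ⊕ Fin n) k' :=
  fromBlocks ((2 : k')⁻¹ • 1) ((2 : k')⁻¹ • 1) T⁻¹ (-T⁻¹)

lemma Ttil_mul_TtilInv (hTinv : IsUnit T.det) :
    (fromBlocks 1 ((2 : k')⁻¹ • T) 1 (-((2 : k')⁻¹ • T))) * TtilInv T = 1 := by
  have hTr : T * T⁻¹ = 1 := mul_nonsing_inv T hTinv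
  rw [TtilInv, fromBlocks_multiply, ← fromBlocks_one]
  refine fromBlocks_inj.mpr ⟨?_, ?_, ?_, ?_⟩ <;>
    simp only [Matrix.smul_mul, Matrix.mul_smul, Matrix.one_mul, Matrix.mul_one,
      Matrix.neg_mul, Matrix.mul_neg, neg_neg, smul_neg, hTr] <;>
    first
      | exact half_add_half _
      | exact add_neg_cancel _
      | exact neg_add_cancel _

lemma TtilInv_mul_Ttil (hTinv : IsUnit T.det) :
    TtilInv T * (fromBlocks 1 ((2 : k')⁻¹ • T) 1 (-((2 : k')⁻¹ • T)) :
      Matrix (Fin n ⊕ Fin n) (Fin n ⊕ Fin n) k') = 1 := by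
  have hTl : T⁻¹ * T = 1 := nonsing_inv_mul T hTinv
  rw [TtilInv, fromBlocks_multiply, ← fromBlocks_one]
  refine fromBlocks_inj.mpr ⟨?_, ?_, ?_, ?_⟩ <;>
    simp only [Matrix.smul_mul, Matrix.mul_smul, Matrix.one_mul, Matrix.mul_one,
      Matrix.neg_mul, Matrix.mul_neg, neg_neg, smul_neg, hTl] <;>
    first
      | exact half_add_half _
      | exact add_neg_cancel _
      | exact neg_add_cancel _

lemma Hmat_mul_Hmat (n : ℕ) : Hmat k' n * Hmat k' n = 1 := by
  rw [Hmat, fromBlocks_multiply, ← fromBlocks_one]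
  refine fromBlocks_inj.mpr ⟨?_, ?_, ?_, ?_⟩ <;>
    simp

lemma Ttil_mul_xT (hherm : ctr conj T = T) :
    (fromBlocks 1 ((2 : k')⁻¹ • T) 1 (-((2 : k')⁻¹ • T)) :
        Matrix (Fin n ⊕ Fin n) (Fin n ⊕ Fin n) k') *
      (fromRows ((2 : k')⁻¹ • T) 1 : Matrix (Fin n ⊕ Fin n) (Fin n) k') = fromRows T 0 := by
  rw [fromBlocks_mul_fromRows]
  refine (fromRows_ext_iff _ _ _ _).mpr ⟨?_, ?_⟩
  · rw [Matrix.one_mul, Matrix.mul_one, half_add_half]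
  · rw [Matrix.one_mul, Matrix.mul_one, add_neg_cancel]

lemma ctr_Ttil (hherm : ctr conj T = T) (hinvol : ∀ a, conj (conj a) = a) :
    ctr conj (fromBlocks 1 ((2 : k')⁻¹ • T) 1 (-((2 : k')⁻¹ • T))) =
      (fromBlocks 1 1 ((2 : k')⁻¹ • T) (-((2 : k')⁻¹ • T)) :
        Matrix (Fin n ⊕ Fin n) (Fin n ⊕ Fin n) k') := by
  rw [ctr_fromBlocks, ctr_one, ctr_neg, ctr_smul, conj_half, hherm]

lemma Ttil_H_ctrTtil (hherm : ctr conj T = T) (hinvol : ∀ a, conj (conj a) = a) :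
    (fromBlocks 1 ((2 : k')⁻¹ • T) 1 (-((2 : k')⁻¹ • T))) * Hmat k' n *
      ctr conj (fromBlocks 1 ((2 : k')⁻¹ • T) 1 (-((2 : k')⁻¹ • T))) =
      fromBlocks T 0 0 (-T) := by
  rw [ctr_Ttil conj T hherm hinvol, Hmat, fromBlocks_multiply, fromBlocks_multiply]
  refine fromBlocks_inj.mpr ⟨?_, ?_, ?_, ?_⟩ <;>
    simp only [Matrix.one_mul, Matrix.mul_one, Matrix.mul_zero, Matrix.zero_mul,
      Matrix.neg_mul, Matrix.mul_neg, add_zero, zero_add, neg_neg] <;>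
    first
      | exact half_add_half _
      | exact add_neg_cancel _
      | exact neg_add_cancel _
      | (rw [← neg_add]; exact congrArg Neg.neg (half_add_half _))

lemma unitary_flip {N : Type} [Fintype N] [DecidableEq N]
    (hinvol : ∀ a, conj (conj a) = a) (H : Matrix N N k') (hHH : H * H = 1)
    (g : Matrix N N k') (hdet : IsUnit g.det) (hg : ctr conj g * H * g = H) :
    g * H * ctr conj g = H := by
  have hgr : g * g⁻¹ = 1 := mul_nonsing_inv g hdet
  have h1 : ctr conj g * H = H * g⁻¹ := by
    calc ctr conj g * H = ctr conj g * H * (g * g⁻¹) := by rw [hgr, Matrix.mul_one]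
    _ = (ctr conj g * H * g) * g⁻¹ := by simp only [Matrix.mul_assoc]
    _ = H * g⁻¹ := by rw [hg]
  have h2 : ctr conj g = H * g⁻¹ * H := by
    calc ctr conj g = ctr conj g * (H * H) := by rw [hHH, Matrix.mul_one]
    _ = (ctr conj g * H) * H := by simp only [Matrix.mul_assoc]
    _ = H * g⁻¹ * H := by rw [h1]
  rw [h2]
  calc g * H * (H * g⁻¹ * H) = g * (H * H) * (g⁻¹ * H) := by simp only [Matrix.mul_assoc]
  _ = g * g⁻¹ * H := by rw [hHH, Matrix.mul_one]; simp only [Matrix.mul_assoc]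
  _ = H := by rw [hgr, Matrix.one_mul]

lemma unitary_flip' {N : Type} [Fintype N] [DecidableEq N]
    (hinvol : ∀ a, conj (conj a) = a) (H : Matrix N N k') (hHH : H * H = 1)
    (g : Matrix N N k') (hdet : IsUnit g.det) (hg : g * H * ctr conj g = H) :
    ctr conj g * H * g = H := by
  have hdet' : IsUnit (ctr conj g).det := isUnit_det_ctr conj g hdet
  have := unitary_flip conj hinvol H hHH (ctr conj g) hdet'
    (by rwa [ctr_ctr conj hinvol])
  rwa [ctr_ctr conj hinvol] at this


lemma fwd (hinvol : ∀ a, conj (conj a) = a)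
    (hherm : ctr conj T = T) (hTinv : IsUnit T.det)
    (xT : Matrix (Fin n ⊕ Fin n) (Fin n) k')
    (hxT : xT = Matrix.fromRows ((2 : k')⁻¹ • T) 1)
    (Ttil : Matrix (Fin n ⊕ Fin n) (Fin n ⊕ Fin n) k')
    (hTtil : Ttil = Matrix.fromBlocks 1 ((2 : k')⁻¹ • T) 1 (-((2 : k')⁻¹ • T)))
    (g : Matrix (Fin n ⊕ Fin n) (Fin n ⊕ Fin n) k') (hU : inU conj (Hmat k' n) g)
    (h : Matrix (Fin n) (Fin n) k') (hh : inU conj T h) (hcom : g * xT = xT * h) :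
    ∃ h₁ h₂, inU conj T h₁ ∧ inU conj T h₂ ∧
      g = Ttil⁻¹ * Matrix.fromBlocks (ctr conj h₁) 0 0 (ctr conj h₂) * Ttil := by
  obtain ⟨hgU, hgdet⟩ := hU
  have hTr : T * T⁻¹ = 1 := mul_nonsing_inv T hTinv
  have hTl : T⁻¹ * T = 1 := nonsing_inv_mul T hTinv
  have hTI1 : Ttil * TtilInv T = 1 := by rw [hTtil]; exact Ttil_mul_TtilInv T hTinv
  have hTI2 : TtilInv T * Ttil = 1 := by rw [hTtil]; exact TtilInv_mul_Ttil T hTinv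
  have hTinvEq : Ttil⁻¹ = TtilInv T := inv_eq_right_inv hTI1
  have hTx : Ttil * xT = (fromRows T 0 : Matrix (Fin n ⊕ Fin n) (Fin n) k') := by rw [hTtil, hxT]; exact Ttil_mul_xT conj T hherm
  have hM : Ttil * Hmat k' n * ctr conj Ttil = fromBlocks T 0 0 (-T) := by
    rw [hTtil]; exact Ttil_H_ctrTtil conj T hherm hinvol
  have hHH := Hmat_mul_Hmat (k' := k') n
  have hcan : ∀ X : Matrix (Fin n ⊕ Fin n) (Fin n ⊕ Fin n) k',
      TtilInv T * (Ttil * X) = X := fun X => by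
    rw [← Matrix.mul_assoc, hTI2, Matrix.one_mul]
  have hcc : ∀ X : Matrix (Fin n ⊕ Fin n) (Fin n ⊕ Fin n) k',
      ctr conj Ttil * (ctr conj (TtilInv T) * X) = X := fun X => by
    rw [← Matrix.mul_assoc, ← ctr_mul, hTI2, ctr_one, Matrix.one_mul]
  set D := Ttil * g * TtilInv T with hDdef
  have hDrows : D * (fromRows T 0 : Matrix (Fin n ⊕ Fin n) (Fin n) k') = fromRows (T * h) 0 := by
    have e1 : D * (Ttil * xT) = Ttil * (g * xT) := by
      rw [hDdef]
      simp only [Matrix.mul_assoc]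
      rw [← Matrix.mul_assoc (TtilInv T) Ttil xT, hTI2, Matrix.one_mul]
    rw [← hTx, e1, hcom, ← Matrix.mul_assoc, hTx, fromRows_mul, Matrix.zero_mul]
  set a := D.toBlocks₁₁ with ha
  set b := D.toBlocks₁₂ with hb
  set c := D.toBlocks₂₁ with hc
  set d := D.toBlocks₂₂ with hd
  have hDblocks : D = fromBlocks a b c d := (fromBlocks_toBlocks D).symm
  rw [hDblocks, fromBlocks_mul_fromRows, Matrix.mul_zero, Matrix.mul_zero, add_zero,
    add_zero, fromRows_ext_iff] at hDrows
  obtain ⟨haT, hcT⟩ := hDrows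
  have hc0 : c = 0 := by
    calc c = c * T * T⁻¹ := by rw [Matrix.mul_assoc, hTr, Matrix.mul_one]
    _ = 0 := by rw [hcT, Matrix.zero_mul]
  have hflip : g * Hmat k' n * ctr conj g = Hmat k' n :=
    unitary_flip conj hinvol _ hHH g hgdet hgU
  have hDM : D * fromBlocks T 0 0 (-T) * ctr conj D = fromBlocks T 0 0 (-T) := by
    have hgH : ∀ X : Matrix (Fin n ⊕ Fin n) (Fin n ⊕ Fin n) k',
        g * (Hmat k' n * (ctr conj g * X)) = Hmat k' n * X := fun X => by
      rw [show g * (Hmat k' n * (ctr conj g * X)) = (g * Hmat k' n * ctr conj g) * X by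
        simp only [Matrix.mul_assoc], hflip]
    rw [← hM, hDdef, ctr_mul, ctr_mul]
    simp only [Matrix.mul_assoc]
    rw [hcan, hcc, hgH]
  rw [hDblocks, hc0, ctr_fromBlocks, ctr_zero, fromBlocks_multiply, fromBlocks_multiply] at hDM
  simp only [Matrix.mul_zero, Matrix.zero_mul, add_zero, zero_add, Matrix.mul_neg,
    Matrix.neg_mul, fromBlocks_inj] at hDM
  obtain ⟨e11, e12, e21, e22⟩ := hDM
  have e22' : d * T * ctr conj d = T := by
    have := congrArg Neg.neg e22
    rwa [neg_neg, neg_neg] at this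
  have hdetd : IsUnit d.det := by
    have h1 := congrArg Matrix.det e22'
    rw [det_mul, det_mul] at h1
    have h2 : IsUnit (d.det * T.det * (ctr conj d).det) := by rw [h1]; exact hTinv
    exact isUnit_of_mul_isUnit_left (isUnit_of_mul_isUnit_left h2)
  have hb0 : b = 0 := by
    have e21' : d * (T * ctr conj b) = 0 := by
      rw [← Matrix.mul_assoc]
      exact neg_eq_zero.mp e21
    have h3 : T * ctr conj b = 0 := by
      calc T * ctr conj b = d⁻¹ * (d * (T * ctr conj b)) := by
            rw [← Matrix.mul_assoc, nonsing_inv_mul d hdetd, Matrix.one_mul]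
      _ = 0 := by rw [e21', Matrix.mul_zero]
    have h4 : ctr conj b = 0 := by
      calc ctr conj b = T⁻¹ * (T * ctr conj b) := by
            rw [← Matrix.mul_assoc, hTl, Matrix.one_mul]
      _ = 0 := by rw [h3, Matrix.mul_zero]
    have h5 := congrArg (ctr conj) h4
    rwa [ctr_ctr conj hinvol, ctr_zero] at h5
  have e11' : a * T * ctr conj a = T := by
    rw [hb0] at e11
    simpa [ctr_zero] using e11
  have hdeta : IsUnit a.det := by
    have h1 := congrArg Matrix.det e11'
    rw [det_mul, det_mul] at h1
    have h2 : IsUnit (a.det * T.det * (ctr conj a).det) := by rw [h1]; exact hTinv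
    exact isUnit_of_mul_isUnit_left (isUnit_of_mul_isUnit_left h2)
  refine ⟨ctr conj a, ctr conj d,
    ⟨by rw [ctr_ctr conj hinvol]; exact e11', isUnit_det_ctr conj a hdeta⟩,
    ⟨by rw [ctr_ctr conj hinvol]; exact e22', isUnit_det_ctr conj d hdetd⟩, ?_⟩
  rw [ctr_ctr conj hinvol, ctr_ctr conj hinvol, hTinvEq]
  have hfb : fromBlocks a (0 : Matrix (Fin n) (Fin n) k') 0 d = D := by
    rw [hDblocks, hb0, hc0]
  rw [hfb, hDdef]
  simp only [Matrix.mul_assoc]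
  rw [hcan, hTI2, Matrix.mul_one]

lemma bwd (hinvol : ∀ a, conj (conj a) = a)
    (hherm : ctr conj T = T) (hTinv : IsUnit T.det)
    (xT : Matrix (Fin n ⊕ Fin n) (Fin n) k')
    (hxT : xT = Matrix.fromRows ((2 : k')⁻¹ • T) 1)
    (Ttil : Matrix (Fin n ⊕ Fin n) (Fin n ⊕ Fin n) k')
    (hTtil : Ttil = Matrix.fromBlocks 1 ((2 : k')⁻¹ • T) 1 (-((2 : k')⁻¹ • T)))
    (h₁ h₂ : Matrix (Fin n) (Fin n) k') (hh₁ : inU conj T h₁) (hh₂ : inU conj T h₂) :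
    inU conj (Hmat k' n) (Ttil⁻¹ * Matrix.fromBlocks (ctr conj h₁) 0 0 (ctr conj h₂) * Ttil) ∧
    ∃ h, inU conj T h ∧
      (Ttil⁻¹ * Matrix.fromBlocks (ctr conj h₁) 0 0 (ctr conj h₂) * Ttil) * xT = xT * h := by
  obtain ⟨hU1, hd1⟩ := hh₁
  obtain ⟨hU2, hd2⟩ := hh₂
  have hTr : T * T⁻¹ = 1 := mul_nonsing_inv T hTinv
  have hTl : T⁻¹ * T = 1 := nonsing_inv_mul T hTinv
  have hTI1 : Ttil * TtilInv T = 1 := by rw [hTtil]; exact Ttil_mul_TtilInv T hTinv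
  have hTI2 : TtilInv T * Ttil = 1 := by rw [hTtil]; exact TtilInv_mul_Ttil T hTinv
  have hTinvEq : Ttil⁻¹ = TtilInv T := inv_eq_right_inv hTI1
  have hTx : Ttil * xT = (fromRows T 0 : Matrix (Fin n ⊕ Fin n) (Fin n) k') := by rw [hTtil, hxT]; exact Ttil_mul_xT conj T hherm
  have hM : Ttil * Hmat k' n * ctr conj Ttil = fromBlocks T 0 0 (-T) := by
    rw [hTtil]; exact Ttil_H_ctrTtil conj T hherm hinvol
  have hHH := Hmat_mul_Hmat (k' := k') n
  have hcan : ∀ X : Matrix (Fin n ⊕ Fin n) (Fin n ⊕ Fin n) k',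
      TtilInv T * (Ttil * X) = X := fun X => by
    rw [← Matrix.mul_assoc, hTI2, Matrix.one_mul]
  have hcc' : ctr conj Ttil * ctr conj (TtilInv T) = 1 := by
    rw [← ctr_mul, hTI2, ctr_one]
  set D := (fromBlocks (ctr conj h₁) 0 0 (ctr conj h₂) :
    Matrix (Fin n ⊕ Fin n) (Fin n ⊕ Fin n) k') with hDdef
  have hctrD : ctr conj D = fromBlocks h₁ 0 0 h₂ := by
    rw [hDdef, ctr_fromBlocks, ctr_zero, ctr_ctr conj hinvol, ctr_ctr conj hinvol]
  have hDM : D * fromBlocks T 0 0 (-T) * ctr conj D = fromBlocks T 0 0 (-T) := by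
    rw [hctrD, hDdef, fromBlocks_multiply, fromBlocks_multiply]
    refine fromBlocks_inj.mpr ⟨?_, ?_, ?_, ?_⟩ <;>
      simp only [Matrix.mul_zero, Matrix.zero_mul, add_zero, zero_add, Matrix.mul_neg,
        Matrix.neg_mul, neg_zero] <;>
      first
        | rfl
        | exact hU1
        | rw [hU2]
  have hdetTil : IsUnit Ttil.det := isUnit_det_of_right_inverse hTI1
  have hdetTilInv : IsUnit (TtilInv T).det := isUnit_det_of_right_inverse hTI2
  have hdetD : IsUnit D.det := by
    rw [hDdef, det_fromBlocks_zero₂₁]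
    exact (isUnit_det_ctr conj h₁ hd1).mul (isUnit_det_ctr conj h₂ hd2)
  have hdetg : IsUnit (Ttil⁻¹ * D * Ttil).det := by
    rw [det_mul, det_mul, hTinvEq]
    exact (hdetTilInv.mul hdetD).mul hdetTil
  have hflip : (Ttil⁻¹ * D * Ttil) * Hmat k' n * ctr conj (Ttil⁻¹ * D * Ttil) = Hmat k' n := by
    rw [hTinvEq, ctr_mul, ctr_mul]
    have hMX : ∀ X : Matrix (Fin n ⊕ Fin n) (Fin n ⊕ Fin n) k',
        Ttil * (Hmat k' n * (ctr conj Ttil * X)) = fromBlocks T 0 0 (-T) * X := fun X => by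
      rw [show Ttil * (Hmat k' n * (ctr conj Ttil * X)) =
        (Ttil * Hmat k' n * ctr conj Ttil) * X by simp only [Matrix.mul_assoc], hM]
    have hDX : ∀ X : Matrix (Fin n ⊕ Fin n) (Fin n ⊕ Fin n) k',
        D * (fromBlocks T 0 0 (-T) * (ctr conj D * X)) = fromBlocks T 0 0 (-T) * X := fun X => by
      rw [show D * (fromBlocks T 0 0 (-T) * (ctr conj D * X)) =
        (D * fromBlocks T 0 0 (-T) * ctr conj D) * X by simp only [Matrix.mul_assoc], hDM]
    simp only [Matrix.mul_assoc]
    rw [hMX, hDX, ← hM]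
    simp only [Matrix.mul_assoc]
    rw [hcan, hcc', Matrix.mul_one]
  have hUg : ctr conj (Ttil⁻¹ * D * Ttil) * Hmat k' n * (Ttil⁻¹ * D * Ttil) = Hmat k' n :=
    unitary_flip' conj hinvol _ hHH _ hdetg hflip
  have hctrTinv : ctr conj T⁻¹ = T⁻¹ := by
    have h0 : ctr conj (T * T⁻¹) = ctr conj T⁻¹ * ctr conj T := ctr_mul conj T T⁻¹
    rw [hTr, ctr_one, hherm] at h0
    exact (Matrix.inv_eq_left_inv h0.symm).symm
  have hcanT : ∀ X : Matrix (Fin n) (Fin n) k', T⁻¹ * (T * X) = X := fun X => by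
    rw [← Matrix.mul_assoc, hTl, Matrix.one_mul]
  have e2 : ctr conj h₁ * T = T * h₁⁻¹ := by
    have hr : h₁ * h₁⁻¹ = 1 := mul_nonsing_inv h₁ hd1
    calc ctr conj h₁ * T = ctr conj h₁ * T * (h₁ * h₁⁻¹) := by rw [hr, Matrix.mul_one]
    _ = (ctr conj h₁ * T * h₁) * h₁⁻¹ := by simp only [Matrix.mul_assoc]
    _ = T * h₁⁻¹ := by rw [hU1]
  refine ⟨⟨hUg, hdetg⟩, T⁻¹ * (ctr conj h₁ * T), ⟨?_, ?_⟩, ?_⟩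
  · -- ctr h * T * h = T
    have hctrh : ctr conj (T⁻¹ * (ctr conj h₁ * T)) = T * (h₁ * T⁻¹) := by
      rw [ctr_mul, ctr_mul, ctr_ctr conj hinvol, hctrTinv, hherm]
      simp only [Matrix.mul_assoc]
    rw [hctrh]
    simp only [Matrix.mul_assoc]
    rw [hcanT, e2, hcanT, mul_nonsing_inv h₁ hd1, Matrix.mul_one]
  · rw [det_mul, det_mul]
    exact (isUnit_nonsing_inv_det T hTinv).mul ((isUnit_det_ctr conj h₁ hd1).mul hTinv)
  · -- coset equation
    have hxT2 : xT = TtilInv T * (fromRows T 0 : Matrix (Fin n ⊕ Fin n) (Fin n) k') := by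
      rw [← hTx, ← Matrix.mul_assoc, hTI2, Matrix.one_mul]
    have lhs1 : D * (fromRows T 0 : Matrix (Fin n ⊕ Fin n) (Fin n) k') = fromRows (ctr conj h₁ * T) 0 := by
      rw [hDdef, fromBlocks_mul_fromRows]
      simp only [Matrix.mul_zero, Matrix.zero_mul, add_zero, zero_add]
    have eTh : T * (T⁻¹ * (ctr conj h₁ * T)) = ctr conj h₁ * T := by
      rw [← Matrix.mul_assoc, hTr, Matrix.one_mul]
    calc (Ttil⁻¹ * D * Ttil) * xT = Ttil⁻¹ * (D * (Ttil * xT)) := by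
          have : Ttil * xT = Ttil * xT := rfl
          simp only [Matrix.mul_assoc]
    _ = TtilInv T * (fromRows (ctr conj h₁ * T) 0 : Matrix (Fin n ⊕ Fin n) (Fin n) k') := by rw [hTx, lhs1, hTinvEq]
    _ = TtilInv T * (fromRows (T * (T⁻¹ * (ctr conj h₁ * T))) 0 : Matrix (Fin n ⊕ Fin n) (Fin n) k') := by rw [eTh]
    _ = (TtilInv T * (fromRows T 0 : Matrix (Fin n ⊕ Fin n) (Fin n) k')) * (T⁻¹ * (ctr conj h₁ * T)) := by
          rw [Matrix.mul_assoc, fromRows_mul, Matrix.zero_mul]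
    _ = xT * (T⁻¹ * (ctr conj h₁ * T)) := by rw [hxT2]

end Main


end StabAux


open StabAux in
/-- description of the stabilizer in `U(H_n)` of the coset `x_T · U(T)`. -/
theorem stmt0 {k' : Type} [Field k'] [CharZero k']
    (conj : k' ≃+* k') (hinvol : ∀ a, conj (conj a) = a) (hne : ∃ a, conj a ≠ a)
    (n : ℕ) (T : Matrix (Fin n) (Fin n) k')
    (hherm : ctr conj T = T) (hTinv : IsUnit T.det)
    (xT : Matrix (Fin n ⊕ Fin n) (Fin n) k')
    (hxT : xT = Matrix.fromRows ((2 : k')⁻¹ • T) 1)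
    (Ttil : Matrix (Fin n ⊕ Fin n) (Fin n ⊕ Fin n) k')
    (hTtil : Ttil = Matrix.fromBlocks 1 ((2 : k')⁻¹ • T) 1 (-((2 : k')⁻¹ • T))) :
    (∀ g : Matrix (Fin n ⊕ Fin n) (Fin n ⊕ Fin n) k', inU conj (Hmat k' n) g →
      ((∃ h, inU conj T h ∧ g * xT = xT * h) ↔
        (∃ h₁ h₂, inU conj T h₁ ∧ inU conj T h₂ ∧
          g = Ttil⁻¹ * Matrix.fromBlocks (ctr conj h₁) 0 0 (ctr conj h₂) * Ttil)))
    ∧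
    {g : Matrix (Fin n ⊕ Fin n) (Fin n ⊕ Fin n) k' |
        inU conj (Hmat k' n) g ∧ ∃ h, inU conj T h ∧ g * xT = xT * h} =
      {g : Matrix (Fin n ⊕ Fin n) (Fin n ⊕ Fin n) k' |
        ∃ h₁ h₂, inU conj T h₁ ∧ inU conj T h₂ ∧
          g = Ttil⁻¹ * Matrix.fromBlocks (ctr conj h₁) 0 0 (ctr conj h₂) * Ttil} := by
  constructor
  · intro g hg
    constructor
    · rintro ⟨h, hh, hcom⟩
      exact fwd conj T hinvol hherm hTinv xT hxT Ttil hTtil g hg h hh hcom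
    · rintro ⟨h₁, h₂, hh₁, hh₂, rfl⟩
      obtain ⟨_, h, hh, hcom⟩ := bwd conj T hinvol hherm hTinv xT hxT Ttil hTtil h₁ h₂ hh₁ hh₂
      exact ⟨h, hh, hcom⟩
  · ext g
    simp only [Set.mem_setOf_eq]
    constructor
    · rintro ⟨hg, h, hh, hcom⟩
      exact fwd conj T hinvol hherm hTinv xT hxT Ttil hTtil g hg h hh hcom
    · rintro ⟨h₁, h₂, hh₁, hh₂, rfl⟩
      obtain ⟨hU, hex⟩ := bwd conj T hinvol hherm hTinv xT hxT Ttil hTtil h₁ h₂ hh₁ hh₂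
      exact ⟨hU, hex⟩
end
end

section
/- Let T ∈ M_n(k') be invertible hermitian and let b = [[β, γ],[0, β^{*−1}]] ∈ GL_{2n}(k') (n×n blocks), where β ∈ GL_n(k') is upper triangular with diagonal entries β_1,…,β_n and γ ∈ M_n(k') is arbitrary; in particular b may be any element of the Borel subgroup B = {[[β,0],[0,β^{*−1}]]·[[1_n,a],[0,1_n]] : β upper triangular invertible, a + a* = 0} of U(H_n). Then for every x ∈ M_{2n,n}(k') and every 1 ≤ i ≤ n: f_{T,i}(b·x) = (∏_{j=1}^{i} N(β_j))^{−1} · f_{T,i}(x). -/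
open Matrix
noncomputable section

/-- The lower `n × n` block of a `2n × n` matrix. -/
def lowerBlock {k' : Type} [Field k'] {n : ℕ} (x : Matrix (Fin n ⊕ Fin n) (Fin n) k') :
    Matrix (Fin n) (Fin n) k' := fun i j => x (Sum.inr i) j

/-- `d_i(y)` : determinant of the upper left `i × i` block of `y`. -/
def dmin {k' : Type} [Field k'] {n : ℕ} (i : ℕ) (hi : i ≤ n)
    (y : Matrix (Fin n) (Fin n) k') : k' :=
  (y.submatrix (Fin.castLE hi) (Fin.castLE hi)).det

/-- The relative invariant `f_{T,i}(x) = d_i(x₂ T⁻¹ x₂*)`. -/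
def fTi {k' : Type} [Field k'] (conj : k' ≃+* k') {n : ℕ}
    (T : Matrix (Fin n) (Fin n) k') (x : Matrix (Fin n ⊕ Fin n) (Fin n) k')
    (i : ℕ) (hi : i ≤ n) : k' :=
  dmin i hi (lowerBlock x * T⁻¹ * ctr conj (lowerBlock x))

section helpers
variable {k' : Type} [Field k'] (conj : k' ≃+* k')

lemma ctr_mul {m l p : Type} [Fintype l] (A : Matrix m l k') (B : Matrix l p k') :
    ctr conj (A * B) = ctr conj B * ctr conj A := by
  funext i j
  simp [ctr, Matrix.mul_apply, map_sum, mul_comm]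

lemma ctr_one {n : ℕ} : ctr conj (1 : Matrix (Fin n) (Fin n) k') = 1 := by
  funext i j
  simp [ctr, Matrix.one_apply, apply_ite conj, eq_comm]

lemma ctr_ctr (hinvol : ∀ a, conj (conj a) = a) {m l : Type} (A : Matrix m l k') :
    ctr conj (ctr conj A) = A := by
  funext i j; simp [ctr, hinvol]

lemma ctr_inv {n : ℕ} (A : Matrix (Fin n) (Fin n) k') (hA : IsUnit A.det) :
    (ctr conj A)⁻¹ = ctr conj A⁻¹ := by
  apply Matrix.inv_eq_right_inv
  rw [← ctr_mul, Matrix.nonsing_inv_mul A hA, ctr_one]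

lemma sum_fin_castLE {n i : ℕ} (hi : i ≤ n) (f : Fin n → k')
    (hf : ∀ a : Fin n, i ≤ (a : ℕ) → f a = 0) :
    ∑ a : Fin n, f a = ∑ a : Fin i, f (Fin.castLE hi a) := by
  rw [← Finset.sum_filter_add_sum_filter_not Finset.univ (fun a : Fin n => (a : ℕ) < i)]
  rw [Finset.sum_eq_zero (fun a ha => hf a (le_of_not_gt (Finset.mem_filter.mp ha).2)), add_zero]
  refine (Finset.sum_bij' (i := fun (a : Fin i) _ => Fin.castLE hi a)
    (j := fun a ha => (⟨(a : ℕ), (Finset.mem_filter.mp ha).2⟩ : Fin i)) ?_ ?_ ?_ ?_ ?_).symm <;>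
    simp_all [Fin.castLE, Fin.ext_iff]

lemma prod_fin_castLE {n i : ℕ} (hi : i ≤ n) (f : Fin n → k') :
    ∏ a ∈ Finset.univ.filter (fun a : Fin n => (a : ℕ) < i), f a
      = ∏ a : Fin i, f (Fin.castLE hi a) := by
  refine (Finset.prod_bij' (i := fun (a : Fin i) _ => Fin.castLE hi a)
    (j := fun a ha => (⟨(a : ℕ), (Finset.mem_filter.mp ha).2⟩ : Fin i)) ?_ ?_ ?_ ?_ ?_).symm <;>
    simp_all [Fin.castLE, Fin.ext_iff]

lemma submatrix_mul_left {n i : ℕ} (hi : i ≤ n) (A B : Matrix (Fin n) (Fin n) k')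
    (hA : ∀ p q : Fin n, p < q → A p q = 0) :
    (A * B).submatrix (Fin.castLE hi) (Fin.castLE hi)
      = A.submatrix (Fin.castLE hi) (Fin.castLE hi) * B.submatrix (Fin.castLE hi) (Fin.castLE hi) := by
  funext p q
  simp only [Matrix.mul_apply, Matrix.submatrix_apply]
  refine sum_fin_castLE hi _ (fun a ha => ?_)
  rw [hA _ _ (by have := p.isLt; simp only [Fin.lt_def, Fin.coe_castLE]; omega), zero_mul]

lemma submatrix_mul_right {n i : ℕ} (hi : i ≤ n) (A B : Matrix (Fin n) (Fin n) k')
    (hB : ∀ p q : Fin n, q < p → B p q = 0) :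
    (A * B).submatrix (Fin.castLE hi) (Fin.castLE hi)
      = A.submatrix (Fin.castLE hi) (Fin.castLE hi) * B.submatrix (Fin.castLE hi) (Fin.castLE hi) := by
  funext p q
  simp only [Matrix.mul_apply, Matrix.submatrix_apply]
  refine sum_fin_castLE hi _ (fun a ha => ?_)
  rw [hB _ _ (by have := q.isLt; simp only [Fin.lt_def, Fin.coe_castLE]; omega), mul_zero]

end helpers

section helpers2
variable {k' : Type} [Field k'] (conj : k' ≃+* k')

lemma det_ctr {n : ℕ} (A : Matrix (Fin n) (Fin n) k') :
    (ctr conj A).det = conj A.det := by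
  have h : ctr conj A = (A.map ⇑conj)ᵀ := rfl
  rw [h, Matrix.det_transpose]
  exact ((conj : k' →+* k').map_det A).symm

lemma lowerBlock_fromBlocks_mul {n : ℕ} (β γ δ : Matrix (Fin n) (Fin n) k')
    (x : Matrix (Fin n ⊕ Fin n) (Fin n) k') :
    lowerBlock ((Matrix.fromBlocks β γ 0 δ) * x) = δ * lowerBlock x := by
  funext p q
  simp [lowerBlock, Matrix.mul_apply, Fintype.sum_sum_type, Matrix.fromBlocks]

end helpers2

/-- `f_{T,i}` is a relative `B`-invariant:
`f_{T,i}(b·x) = (∏_{j=1}^i N(β_j))⁻¹ · f_{T,i}(x)` for `b = [[β,γ],[0,β^{*-1}]]`. -/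
theorem stmt1 {k' : Type} [Field k']
    (conj : k' ≃+* k') (hinvol : ∀ a, conj (conj a) = a) (hne : ∃ a, conj a ≠ a)
    (n : ℕ) (T : Matrix (Fin n) (Fin n) k')
    (hherm : ctr conj T = T) (hTinv : IsUnit T.det)
    (β : Matrix (Fin n) (Fin n) k') (hβut : β.BlockTriangular (id : Fin n → Fin n))
    (hβinv : IsUnit β.det)
    (γ : Matrix (Fin n) (Fin n) k')
    (b : Matrix (Fin n ⊕ Fin n) (Fin n ⊕ Fin n) k')
    (hb : b = Matrix.fromBlocks β γ 0 (ctr conj β)⁻¹) :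
    ∀ (x : Matrix (Fin n ⊕ Fin n) (Fin n) k') (i : ℕ) (hi1 : 1 ≤ i) (hi : i ≤ n),
      fTi conj T (b * x) i hi =
        (∏ j ∈ Finset.univ.filter (fun j : Fin n => (j : ℕ) < i), (β j j * conj (β j j)))⁻¹ * fTi conj T x i hi := by
  intro x i hi1 hi
  haveI : Invertible β := β.invertibleOfIsUnitDet hβinv
  -- triangularity of β⁻¹
  have hUut : β⁻¹.BlockTriangular (id : Fin n → Fin n) :=
    Matrix.blockTriangular_inv_of_blockTriangular hβut
  have hU : ∀ p q : Fin n, q < p → (β⁻¹) p q = 0 := fun p q h => hUut h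
  have hL : ∀ p q : Fin n, p < q → (ctr conj β⁻¹) p q = 0 := fun p q h => by
    simp [ctr, hUut h]
  -- lower block of b * x
  have hlb : lowerBlock (b * x) = ctr conj β⁻¹ * lowerBlock x := by
    rw [hb, lowerBlock_fromBlocks_mul, ctr_inv conj β hβinv]
  -- the matrix whose minor we take
  set M := lowerBlock x * T⁻¹ * ctr conj (lowerBlock x) with hM
  have hM' : lowerBlock (b * x) * T⁻¹ * ctr conj (lowerBlock (b * x))
      = ctr conj β⁻¹ * (M * β⁻¹) := by
    rw [hlb, ctr_mul, ctr_ctr conj hinvol, hM]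
    simp only [Matrix.mul_assoc]
  -- submatrix determinants
  set c := Fin.castLE hi with hc
  have hsub : ((ctr conj β⁻¹ * (M * β⁻¹)).submatrix c c).det
      = ((ctr conj β⁻¹).submatrix c c).det * (M.submatrix c c).det * ((β⁻¹).submatrix c c).det := by
    rw [submatrix_mul_left hi _ _ hL, submatrix_mul_right hi _ _ hU, Matrix.det_mul,
      Matrix.det_mul]
    ring
  -- determinant of β's submatrix
  have hβsubut : (β.submatrix c c).BlockTriangular (id : Fin i → Fin i) := by
    intro p q h
    exact hβut (show (c q : ℕ) < (c p : ℕ) by simpa [hc] using h)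
  have hdβ : (β.submatrix c c).det = ∏ j : Fin i, β (c j) (c j) := by
    rw [Matrix.det_of_upperTriangular hβsubut]; rfl
  -- (β⁻¹).submatrix is the inverse of β.submatrix by det product
  have hone : β.submatrix c c * (β⁻¹).submatrix c c = 1 := by
    rw [← submatrix_mul_right hi _ _ hU, Matrix.mul_nonsing_inv β hβinv]
    funext p q
    simp [Matrix.one_apply, Fin.ext_iff, hc, Fin.castLE]
  have hdetone : (β.submatrix c c).det * ((β⁻¹).submatrix c c).det = 1 := by
    rw [← Matrix.det_mul, hone, Matrix.det_one]
  have hdU : ((β⁻¹).submatrix c c).det = (∏ j : Fin i, β (c j) (c j))⁻¹ := by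
    rw [← hdβ]
    exact eq_inv_of_mul_eq_one_left (by rw [mul_comm] at hdetone; exact hdetone)
  have hLsub : (ctr conj β⁻¹).submatrix c c = ctr conj ((β⁻¹).submatrix c c) := rfl
  have hdL : ((ctr conj β⁻¹).submatrix c c).det = conj ((∏ j : Fin i, β (c j) (c j))⁻¹) := by
    rw [hLsub, det_ctr, hdU]
  -- put it together
  have key : fTi conj T (b * x) i hi
      = conj ((∏ j : Fin i, β (c j) (c j))⁻¹) * (∏ j : Fin i, β (c j) (c j))⁻¹
        * fTi conj T x i hi := by
    unfold fTi dmin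
    rw [hM', ← hc, hsub, hdL, hdU, ← hM]
    ring
  rw [key, prod_fin_castLE hi (fun j => β j j * conj (β j j))]
  rw [Finset.prod_mul_distrib, mul_inv, map_inv₀, ← map_prod]
  ring
end
end

section
/- Let n ≥ 2 and let T ∈ M_n(k') be an invertible diagonal matrix. For every x ∈ 𝔛_T there is a unique hermitian matrix D(x) ∈ M_2(k') (D(x)* = D(x)) such that g(x,v) = v* · D(x) · v for all v ∈ M_{2,1}(k'). Moreover: the diagonal entries D(x)_{11} and D(x)_{22} lie in k; D(x)_{12} + D(x)_{21} = −f_{T,n−1}(x); and if f_{T,i}(x) ≠ 0 for all 1 ≤ i ≤ n, then det D(x) = 0. -/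
open Matrix MeasureTheory
open scoped BigOperators
noncomputable section
open Classical



open Matrix
noncomputable section
open Classical

section Bordered
variable {R : Type} [CommRing R] {m : ℕ}

private lemma detRowLast (M : Matrix (Fin (m+1)) (Fin (m+1)) R) :
    det (M.updateRow (Fin.last m) (Pi.single (Fin.last m) 1)) =
      det (M.submatrix Fin.castSucc Fin.castSucc) := by
  rw [Matrix.det_succ_row _ (Fin.last m)]
  rw [Finset.sum_eq_single (Fin.last m)]
  · have h1 : (M.updateRow (Fin.last m) (Pi.single (Fin.last m) 1)).submatrix
        (Fin.last m).succAbove (Fin.last m).succAbove = M.submatrix Fin.castSucc Fin.castSucc := by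
      ext a b
      simp [Fin.succAbove_last, Matrix.updateRow_ne (Fin.castSucc_lt_last a).ne]
    rw [h1]
    simp only [Fin.val_last, Matrix.updateRow_self, Pi.single_eq_same, mul_one]
    rw [Even.neg_one_pow ⟨m, rfl⟩, one_mul]
  · intro j _ hj
    simp [Matrix.updateRow_self, Pi.single_eq_of_ne hj]
  · simp

private lemma detColLast (M : Matrix (Fin (m+1)) (Fin (m+1)) R)
    (h : ∀ i, M i (Fin.last m) = (Pi.single (Fin.last m) 1 : Fin (m+1) → R) i) :
    det M = det (M.submatrix Fin.castSucc Fin.castSucc) := by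
  have hM : M = (Mᵀ.updateRow (Fin.last m) (Pi.single (Fin.last m) 1))ᵀ := by
    ext i j
    by_cases hj : j = Fin.last m
    · subst hj
      simp [Matrix.updateRow_self, h i]
    · simp [Matrix.transpose_apply, Matrix.updateRow_ne hj]
  rw [hM, Matrix.det_transpose, detRowLast, ← Matrix.det_transpose]
  congr 1
  ext a b
  simp [Matrix.updateRow_ne (Fin.castSucc_lt_last b).ne]

end Bordered

section Bordered2
variable {R : Type} [CommRing R] {m : ℕ}

private lemma adjugate_col (A : Matrix (Fin (m+1)) (Fin (m+1)) R) (i j : Fin (m+1)) :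
    adjugate A i j = det (A.updateCol i (Pi.single j 1)) := by
  have : (A.updateCol i (Pi.single j 1))ᵀ = Aᵀ.updateRow i (Pi.single j 1) :=
    (Matrix.updateRow_transpose).symm
  rw [← Matrix.det_transpose, this, ← Matrix.adjugate_apply, ← Matrix.adjugate_transpose,
    Matrix.transpose_apply]

private lemma detBorderUnit (M : Matrix (Fin (m+1)) (Fin (m+1)) R) (a b : Fin m) :
    det ((M.updateRow (Fin.last m) (Pi.single a.castSucc 1)).updateCol (Fin.last m)
      (Pi.single b.castSucc 1)) = - adjugate (M.submatrix Fin.castSucc Fin.castSucc) a b := by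
  set l := Fin.last m with hl
  set P := (M.updateRow l (Pi.single a.castSucc 1)).updateCol l
      (Pi.single b.castSucc (1:R)) with hP
  have hbl : b.castSucc ≠ l := (Fin.castSucc_lt_last b).ne
  have hswap := Matrix.det_permute (Equiv.swap l b.castSucc) P
  rw [Equiv.Perm.sign_swap (Ne.symm hbl)] at hswap
  set P' : Matrix (Fin (m+1)) (Fin (m+1)) R := Matrix.of fun i j => P (Equiv.swap l b.castSucc i) j
    with hP'
  have hPdet : det P' = - det P := by
    have hPP : P' = P.submatrix (⇑(Equiv.swap l b.castSucc)) id := rfl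
    rw [hPP, hswap]; simp
  have hcol : ∀ i, P' i l = (Pi.single l 1 : Fin (m+1) → R) i := by
    intro i
    have hPc : ∀ i', P i' l = (Pi.single b.castSucc 1 : Fin (m+1) → R) i' := fun i' => by
      simp [hP, Matrix.updateCol_self]
    rcases eq_or_ne i l with rfl | hil
    · simp [hP', hPc, Equiv.swap_apply_left]
    · rcases eq_or_ne i b.castSucc with rfl | hib
      · simp [hP', hPc, Equiv.swap_apply_right, Pi.single_eq_of_ne hbl,
          Pi.single_eq_of_ne (Ne.symm hbl)]
      · simp [hP', hPc, Equiv.swap_apply_of_ne_of_ne hil hib, Pi.single_eq_of_ne hib,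
          Pi.single_eq_of_ne hil]
  have hsub : P'.submatrix Fin.castSucc Fin.castSucc =
      (M.submatrix Fin.castSucc Fin.castSucc).updateRow b (Pi.single a 1) := by
    ext c d
    have hdl : (d.castSucc : Fin (m+1)) ≠ l := (Fin.castSucc_lt_last d).ne
    rcases eq_or_ne c b with rfl | hcb
    · simp only [Matrix.submatrix_apply, hP', Matrix.of_apply, Equiv.swap_apply_right,
        Matrix.updateRow_self]
      rw [hP, Matrix.updateCol_ne hdl, Matrix.updateRow_self]
      simp [Pi.single_apply, Fin.castSucc_inj]
    · have hc1 : (c.castSucc : Fin (m+1)) ≠ l := (Fin.castSucc_lt_last c).ne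
      have hc2 : (c.castSucc : Fin (m+1)) ≠ b.castSucc := by
        simpa [Fin.castSucc_inj] using hcb
      simp only [Matrix.submatrix_apply, hP', Matrix.of_apply,
        Equiv.swap_apply_of_ne_of_ne hc1 hc2]
      rw [hP, Matrix.updateCol_ne hdl, Matrix.updateRow_ne hc1,
        Matrix.updateRow_ne hcb]
      simp
  have h2 := detColLast P' hcol
  rw [hsub, ← Matrix.adjugate_apply] at h2
  linear_combination hPdet - h2

private lemma detRowSingle (M : Matrix (Fin (m+1)) (Fin (m+1)) R) (a : Fin m) :
    det (M.updateRow (Fin.last m) (Pi.single a.castSucc 1)) =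
      -∑ b, M b.castSucc (Fin.last m) * adjugate (M.submatrix Fin.castSucc Fin.castSucc) a b := by
  set l := Fin.last m with hl
  set N := M.updateRow l (Pi.single a.castSucc (1:R)) with hN
  rw [Matrix.det_eq_sum_mul_adjugate_col N l, Fin.sum_univ_castSucc]
  have hNll : N l l = 0 := by
    rw [hN, Matrix.updateRow_self, Pi.single_eq_of_ne (Ne.symm (Fin.castSucc_lt_last a).ne)]
  rw [hNll, zero_mul, add_zero, ← Finset.sum_neg_distrib]
  refine Finset.sum_congr rfl fun b _ => ?_
  have h1 : N b.castSucc l = M b.castSucc l :=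
    congrFun (Matrix.updateRow_ne (Fin.castSucc_lt_last b).ne) l
  have h2 : adjugate N l b.castSucc = - adjugate (M.submatrix Fin.castSucc Fin.castSucc) a b := by
    rw [adjugate_col, hN, detBorderUnit]
  rw [h1, h2]
  ring

private lemma det_bordered (M : Matrix (Fin (m+1)) (Fin (m+1)) R) :
    det M = M (Fin.last m) (Fin.last m) * det (M.submatrix Fin.castSucc Fin.castSucc)
      - ∑ a, ∑ b, M (Fin.last m) a.castSucc *
          adjugate (M.submatrix Fin.castSucc Fin.castSucc) a b * M b.castSucc (Fin.last m) := by
  set l := Fin.last m with hl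
  rw [Matrix.det_eq_sum_mul_adjugate_row M l, Fin.sum_univ_castSucc]
  have hll : adjugate M l l = det (M.submatrix Fin.castSucc Fin.castSucc) := by
    rw [Matrix.adjugate_apply, detRowLast]
  have hca : ∀ a : Fin m, adjugate M a.castSucc l =
      -∑ b, M b.castSucc l * adjugate (M.submatrix Fin.castSucc Fin.castSucc) a b := by
    intro a; rw [Matrix.adjugate_apply, detRowSingle]
  simp only [← hl, hca, hll]
  have hterm : ∀ a : Fin m, M l a.castSucc *
      -∑ b, M b.castSucc l * adjugate (M.submatrix Fin.castSucc Fin.castSucc) a b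
      = -∑ b, M l a.castSucc * adjugate (M.submatrix Fin.castSucc Fin.castSucc) a b
          * M b.castSucc l := by
    intro a
    rw [mul_neg]
    congr 1
    rw [Finset.mul_sum]
    exact Finset.sum_congr rfl fun b _ => by ring
  simp only [hterm, Finset.sum_neg_distrib]
  ring

private lemma core_identity (Q U V : Matrix (Fin (m+1)) (Fin (m+1)) R)
    (hC : U * Q + Q * V = Q) (htr : Matrix.trace U + Matrix.trace V = (m : R) + 1) :
    det (Q.updateCol (Fin.last m) (fun i => U i (Fin.last m)))
    + det (Q.updateRow (Fin.last m) (V (Fin.last m)))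
    = det (Q.submatrix Fin.castSucc Fin.castSucc) := by
  set l := Fin.last m with hl
  set Q0 := Q.submatrix (Fin.castSucc : Fin m → Fin (m+1)) Fin.castSucc with hQ0
  set Ad := adjugate Q0 with hAd
  set d := det Q0 with hd
  -- bordered expansion of the two determinants
  set M1 := Q.updateCol l (fun i => U i l) with hM1
  set M2 := Q.updateRow l (V l) with hM2
  have hne : ∀ c : Fin m, (c.castSucc : Fin (m+1)) ≠ l := fun c => (Fin.castSucc_lt_last c).ne
  have hsub1 : M1.submatrix Fin.castSucc Fin.castSucc = Q0 := by
    ext a b; simp [hM1, hQ0, Matrix.updateCol_ne (hne b)]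
  have hsub2 : M2.submatrix Fin.castSucc Fin.castSucc = Q0 := by
    ext a b; simp [hM2, hQ0, Matrix.updateRow_ne (hne a)]
  have h1 : det M1 = U l l * d
      - ∑ a, ∑ b, Q l a.castSucc * Ad a b * U b.castSucc l := by
    rw [det_bordered M1, hsub1, ← hAd, ← hd]
    congr 1
    · congr 1
      simp [hM1, hl, Matrix.updateCol_self]
    · refine Finset.sum_congr rfl fun a _ => Finset.sum_congr rfl fun b _ => ?_
      congr 1
      · congr 1
        simp [hM1, hl, Matrix.updateCol_ne (hne a)]
      · simp [hM1, hl, Matrix.updateCol_self]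
  have h2 : det M2 = V l l * d
      - ∑ a, ∑ b, V l a.castSucc * Ad a b * Q b.castSucc l := by
    rw [det_bordered M2, hsub2, ← hAd, ← hd]
    congr 1
    · congr 1
      simp [hM2, hl, Matrix.updateRow_self]
    · refine Finset.sum_congr rfl fun a _ => Finset.sum_congr rfl fun b _ => ?_
      congr 1
      · congr 1
        simp [hM2, hl, Matrix.updateRow_self]
      · exact congrFun (Matrix.updateRow_ne (hne b)) l
  -- block form of the constraint
  set A := U.submatrix (Fin.castSucc : Fin m → Fin (m+1)) Fin.castSucc with hA
  set A' := V.submatrix (Fin.castSucc : Fin m → Fin (m+1)) Fin.castSucc with hA'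
  set B1 : Matrix (Fin m) (Fin m) R := Matrix.of fun a b => U a.castSucc l * Q l b.castSucc
    with hB1
  set B2 : Matrix (Fin m) (Fin m) R := Matrix.of fun a b => Q a.castSucc l * V l b.castSucc
    with hB2
  have hMat : A * Q0 + B1 + (Q0 * A' + B2) = Q0 := by
    ext a b
    have hcab := congrFun (congrFun hC a.castSucc) b.castSucc
    simp only [Matrix.add_apply, Matrix.mul_apply] at hcab
    rw [Fin.sum_univ_castSucc, Fin.sum_univ_castSucc] at hcab
    simp only [Matrix.add_apply, Matrix.mul_apply, hB1, hB2, hA, hA', hQ0, Matrix.of_apply,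
      Matrix.submatrix_apply]
    convert hcab using 2 <;> ring
  have htrace := congrArg (fun X => Matrix.trace (X * Ad)) hMat
  simp only [Matrix.add_mul, Matrix.trace_add] at htrace
  have tA : Matrix.trace (A * Q0 * Ad) = d * Matrix.trace A := by
    rw [Matrix.mul_assoc, Matrix.mul_adjugate, mul_smul_comm, mul_one, Matrix.trace_smul,
      smul_eq_mul]
  have tA' : Matrix.trace (Q0 * A' * Ad) = d * Matrix.trace A' := by
    rw [Matrix.trace_mul_comm, ← Matrix.mul_assoc, Matrix.adjugate_mul, smul_mul_assoc, one_mul,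
      Matrix.trace_smul, smul_eq_mul]
  have tB1 : Matrix.trace (B1 * Ad) =
      ∑ a, ∑ b, U a.castSucc l * Q l b.castSucc * Ad b a := by
    simp [Matrix.trace, Matrix.diag, Matrix.mul_apply, hB1]
  have tB2 : Matrix.trace (B2 * Ad) =
      ∑ a, ∑ b, Q a.castSucc l * V l b.castSucc * Ad b a := by
    simp [Matrix.trace, Matrix.diag, Matrix.mul_apply, hB2]
  have tQ : Matrix.trace (Q0 * Ad) = d * (m : R) := by
    rw [Matrix.mul_adjugate, Matrix.trace_smul, Matrix.trace_one, smul_eq_mul]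
    simp [hd]
  rw [tA, tA', tB1, tB2, tQ] at htrace
  -- swap the double sums
  have hswap1 : (∑ a, ∑ b, U a.castSucc l * Q l b.castSucc * Ad b a)
      = ∑ a, ∑ b, Q l a.castSucc * Ad a b * U b.castSucc l := by
    rw [Finset.sum_comm]
    exact Finset.sum_congr rfl fun a _ => Finset.sum_congr rfl fun b _ => by ring
  have hswap2 : (∑ a, ∑ b, Q a.castSucc l * V l b.castSucc * Ad b a)
      = ∑ a, ∑ b, V l a.castSucc * Ad a b * Q b.castSucc l := by
    rw [Finset.sum_comm]
    exact Finset.sum_congr rfl fun a _ => Finset.sum_congr rfl fun b _ => by ring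
  rw [hswap1, hswap2] at htrace
  -- traces of U and V split
  have htrU : Matrix.trace U = Matrix.trace A + U l l := by
    simp only [Matrix.trace, Matrix.diag, hA, Matrix.submatrix_apply]
    rw [Fin.sum_univ_castSucc]
  have htrV : Matrix.trace V = Matrix.trace A' + V l l := by
    simp only [Matrix.trace, Matrix.diag, hA', Matrix.submatrix_apply]
    rw [Fin.sum_univ_castSucc]
  rw [htrU, htrV] at htr
  rw [h1, h2]
  linear_combination d * htr - htrace

private lemma mul_updateColumn {p : Type} [Fintype p] [DecidableEq p]
    (A B : Matrix p p R) (j : p) (c : p → R) :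
    A * (B.updateCol j c) = (A * B).updateCol j (A.mulVec c) := by
  ext i k
  by_cases h : k = j
  · subst h
    simp [Matrix.mul_apply, Matrix.updateCol_self, Matrix.mulVec, dotProduct]
  · simp [Matrix.mul_apply, Matrix.updateCol_ne h]

private lemma updateRow_mul {p : Type} [Fintype p] [DecidableEq p]
    (A B : Matrix p p R) (i : p) (r : p → R) :
    (A.updateRow i r) * B = (A * B).updateRow i (Matrix.vecMul r B) := by
  ext k j
  by_cases h : k = i
  · subst h
    simp [Matrix.mul_apply, Matrix.updateRow_self, Matrix.vecMul, dotProduct]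
  · simp [Matrix.mul_apply, Matrix.updateRow_ne h]

end Bordered2

/-- The hermitian form `H_1 = [[0,1],[1,0]]`. -/
def H1 (k' : Type) [Field k'] : Matrix (Fin 2) (Fin 2) k' := !![0, 1; 1, 0]

/-- The matrix `M(x,v)` : first `n−1` rows those of `x₂`, last row
`v_1·(last row of x₂) − v_2·(last row of the upper block of x)`. -/
def Mxv {k' : Type} [Field k'] {n : ℕ} (x : Matrix (Fin n ⊕ Fin n) (Fin n) k')
    (v : Fin 2 → k') : Matrix (Fin n) (Fin n) k' :=
  fun i j =>
    if (i : ℕ) = n - 1 then v 0 * x (Sum.inr i) j - v 1 * x (Sum.inl i) j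
    else x (Sum.inr i) j

/-- `g(x,v) = det(M(x,v) T⁻¹ M(x,v)*)`. -/
def gxv {k' : Type} [Field k'] (conj : k' ≃+* k') {n : ℕ}
    (T : Matrix (Fin n) (Fin n) k') (x : Matrix (Fin n ⊕ Fin n) (Fin n) k')
    (v : Fin 2 → k') : k' :=
  (Mxv x v * T⁻¹ * ctr conj (Mxv x v)).det


private lemma det_ctr_s8 {k' : Type} [Field k'] (conj : k' ≃+* k') {p : Type} [Fintype p]
    [DecidableEq p] (M : Matrix p p k') : (ctr conj M).det = conj M.det := by
  have h : ctr conj M = (M.map ⇑conj)ᵀ := rfl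
  rw [h, Matrix.det_transpose, RingEquiv.map_det]
  rfl

/-- existence and uniqueness of the hermitian matrix `D(x)` with
`g(x,v) = v* D(x) v`, together with its basic properties. -/
theorem stmt8
    {k' : Type} [Field k'] [CharZero k']
    (conj : k' ≃+* k') (hinvol : ∀ a, conj (conj a) = a) (hconj_ne : ∃ a, conj a ≠ a)
    (n : ℕ) (hn : 2 ≤ n)
    (t : Fin n → k') (ht0 : ∀ i, t i ≠ 0) (htk : ∀ i, conj (t i) = t i)
    (T : Matrix (Fin n) (Fin n) k') (hT : T = Matrix.diagonal t)
    (hTinv : IsUnit T.det)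
    (x : Matrix (Fin n ⊕ Fin n) (Fin n) k') (hx : ctr conj x * Hmat k' n * x = T) :
    ∃ D : Matrix (Fin 2) (Fin 2) k',
      (ctr conj D = D ∧
        ∀ vv : Fin 2 → k',
          gxv conj T x vv = ∑ i : Fin 2, ∑ j : Fin 2, conj (vv i) * D i j * vv j) ∧
      (∀ D' : Matrix (Fin 2) (Fin 2) k',
        (ctr conj D' = D' ∧
          ∀ vv : Fin 2 → k',
            gxv conj T x vv = ∑ i : Fin 2, ∑ j : Fin 2, conj (vv i) * D' i j * vv j) →
        D' = D) ∧
      conj (D 0 0) = D 0 0 ∧ conj (D 1 1) = D 1 1 ∧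
      D 0 1 + D 1 0 = -(fTi conj T x (n - 1) (Nat.sub_le n 1)) ∧
      ((∀ (i : ℕ) (h1 : 1 ≤ i) (h2 : i ≤ n), fTi conj T x i h2 ≠ 0) → D.det = 0) := by
  obtain ⟨m, rfl⟩ : ∃ m, n = m + 1 := ⟨n - 1, by omega⟩
  classical
  set l : Fin (m+1) := Fin.last m with hldef
  set Y : Matrix (Fin (m+1)) (Fin (m+1)) k' := lowerBlock x with hYdef
  set Z : Matrix (Fin (m+1)) (Fin (m+1)) k' := Matrix.of (fun i j => x (Sum.inl i) j) with hZdef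
  have hxrows : x = Matrix.fromRows Z Y := by
    ext ij j; cases ij <;> rfl
  have hctrx : ctr conj x = Matrix.fromCols (ctr conj Z) (ctr conj Y) := by
    ext i j; cases j <;> rfl
  have hHmat : Hmat k' (m+1) = Matrix.fromBlocks 0 1 1 0 := rfl
  have hYZ : ctr conj Y * Z + ctr conj Z * Y = T := by
    rw [← hx, hctrx, hHmat, Matrix.fromCols_mul_fromBlocks]
    conv_rhs => rw [hxrows]
    rw [Matrix.fromCols_mul_fromRows]
    simp
  have hTT : T * T⁻¹ = 1 := Matrix.mul_nonsing_inv T hTinv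
  set Q : Matrix (Fin (m+1)) (Fin (m+1)) k' := Y * T⁻¹ * ctr conj Y with hQdef
  set U : Matrix (Fin (m+1)) (Fin (m+1)) k' := Y * T⁻¹ * ctr conj Z with hUdef
  set V : Matrix (Fin (m+1)) (Fin (m+1)) k' := Z * T⁻¹ * ctr conj Y with hVdef
  have hC : U * Q + Q * V = Q := by
    have e1 : U * Q + Q * V =
        Y * T⁻¹ * ((ctr conj Y * Z + ctr conj Z * Y) * (T⁻¹ * ctr conj Y)) := by
      rw [hQdef, hUdef, hVdef]
      noncomm_ring
    rw [e1, hYZ, ← Matrix.mul_assoc T T⁻¹ (ctr conj Y), hTT, Matrix.one_mul]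
  have htr : Matrix.trace U + Matrix.trace V = (m : k') + 1 := by
    have t1 : Matrix.trace U = Matrix.trace ((ctr conj Z * Y) * T⁻¹) := by
      rw [hUdef, Matrix.trace_mul_comm, ← Matrix.mul_assoc]
    have t2 : Matrix.trace V = Matrix.trace ((ctr conj Y * Z) * T⁻¹) := by
      rw [hVdef, Matrix.trace_mul_comm, ← Matrix.mul_assoc]
    rw [t1, t2, add_comm, ← Matrix.trace_add, ← Matrix.add_mul, hYZ, hTT, Matrix.trace_one]
    push_cast
    simp
  set al := Y.det with hal
  set B : Matrix (Fin (m+1)) (Fin (m+1)) k' := Y.updateRow l (Z l) with hBdef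
  set be := B.det with hbe
  set dT := (T.det)⁻¹ with hdT
  have hdetTinv : (T⁻¹).det = dT := by rw [Matrix.det_nonsing_inv, Ring.inverse_eq_inv]
  have hMv : ∀ v : Fin 2 → k',
      Mxv x v = Y.updateRow l (fun j => v 0 * Y l j - v 1 * Z l j) := by
    intro v
    ext i j
    have hcond : ((i : ℕ) = m + 1 - 1) ↔ i = l := by
      rw [Nat.add_sub_cancel, Fin.ext_iff, Fin.val_last]
    by_cases h : i = l
    · simp only [Mxv, Matrix.updateRow_apply, if_pos h, if_pos (hcond.mpr h)]
      rw [h]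
      rfl
    · simp only [Mxv, Matrix.updateRow_apply, if_neg h, if_neg (fun hc => h (hcond.mp hc))]
      rfl
  have hdetM : ∀ v : Fin 2 → k', (Mxv x v).det = v 0 * al - v 1 * be := by
    intro v
    rw [hMv v]
    have hfun : (fun j => v 0 * Y l j - v 1 * Z l j) = v 0 • Y l + (-(v 1)) • Z l := by
      funext j
      simp only [Pi.add_apply, Pi.smul_apply, smul_eq_mul]
      ring
    rw [hfun, Matrix.det_updateRow_add, Matrix.det_updateRow_smul, Matrix.det_updateRow_smul,
      Matrix.updateRow_eq_self]
    rw [hal, hbe, hBdef]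
    ring
  have hgxv : ∀ v, gxv conj T x v = (v 0 * al - v 1 * be) * conj (v 0 * al - v 1 * be) * dT := by
    intro v
    show ((Mxv x v) * T⁻¹ * ctr conj (Mxv x v)).det = _
    rw [Matrix.det_mul, Matrix.det_mul, hdetTinv, det_ctr_s8, hdetM]
    ring
  set D : Matrix (Fin 2) (Fin 2) k' :=
    !![dT * (al * conj al), -(dT * (be * conj al));
       -(dT * (al * conj be)), dT * (be * conj be)] with hD
  have hD00 : D 0 0 = dT * (al * conj al) := by rw [hD]; rfl
  have hD01 : D 0 1 = -(dT * (be * conj al)) := by rw [hD]; rfl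
  have hD10 : D 1 0 = -(dT * (al * conj be)) := by rw [hD]; rfl
  have hD11 : D 1 1 = dT * (be * conj be) := by rw [hD]; rfl
  have hrep : ∀ vv : Fin 2 → k',
      gxv conj T x vv = ∑ i : Fin 2, ∑ j : Fin 2, conj (vv i) * D i j * vv j := by
    intro vv
    rw [hgxv vv]
    simp only [Fin.sum_univ_two, hD00, hD01, hD10, hD11, _root_.map_sub, _root_.map_mul]
    ring
  have hconjdetT : conj T.det = T.det := by
    rw [hT, Matrix.det_diagonal, _root_.map_prod]
    exact Finset.prod_congr rfl fun i _ => htk i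
  have hconjdT : conj dT = dT := by rw [hdT, map_inv₀, hconjdetT]
  -- the key identity
  have hterm1mat : Y * T⁻¹ * ctr conj B = Q.updateCol l (fun i => U i l) := by
    have hctrB : ctr conj B = (ctr conj Y).updateCol l (fun i => conj (Z l i)) := by
      ext i j
      by_cases h : j = l
      · subst h
        simp [ctr, hBdef, Matrix.updateCol_self, Matrix.updateRow_self]
      · simp [ctr, hBdef, Matrix.updateCol_ne h, Matrix.updateRow_ne h]
    rw [hctrB, mul_updateColumn]
    congr 1
  have hterm2mat : B * (T⁻¹ * ctr conj Y) = Q.updateRow l (V l) := by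
    have hQassoc : Q = Y * (T⁻¹ * ctr conj Y) := by rw [hQdef, Matrix.mul_assoc]
    have hVassoc : V = Z * (T⁻¹ * ctr conj Y) := by rw [hVdef, Matrix.mul_assoc]
    rw [hBdef, _root_.updateRow_mul, hQassoc, hVassoc]
    congr 1
  have hcore := core_identity Q U V hC htr
  have ht1 : (Q.updateCol l fun i => U i l).det = al * dT * conj be := by
    rw [← hterm1mat, Matrix.det_mul, Matrix.det_mul, hdetTinv, det_ctr_s8]
  have ht2 : (Q.updateRow l (V l)).det = be * (dT * conj al) := by
    rw [← hterm2mat, Matrix.det_mul, Matrix.det_mul, hdetTinv, det_ctr_s8]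
  have hfTival : fTi conj T x (m + 1 - 1) (Nat.sub_le (m+1) 1) =
      (Q.submatrix Fin.castSucc Fin.castSucc).det := rfl
  have hmain : D 0 1 + D 1 0 = -(fTi conj T x (m + 1 - 1) (Nat.sub_le (m+1) 1)) := by
    rw [hD01, hD10, hfTival, ← hcore, ht1, ht2]
    ring
  have hd00 : conj (D 0 0) = D 0 0 := by
    rw [hD00, _root_.map_mul, _root_.map_mul, hconjdT, hinvol]; ring
  have hd11 : conj (D 1 1) = D 1 1 := by
    rw [hD11, _root_.map_mul, _root_.map_mul, hconjdT, hinvol]; ring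
  have h01c : conj (D 1 0) = D 0 1 := by
    rw [hD10, hD01, _root_.map_neg, _root_.map_mul, _root_.map_mul, hconjdT, hinvol]; ring
  have h10c : conj (D 0 1) = D 1 0 := by
    rw [hD01, hD10, _root_.map_neg, _root_.map_mul, _root_.map_mul, hconjdT, hinvol]; ring
  have hherm : ctr conj D = D := by
    ext i j
    fin_cases i <;> fin_cases j
    · exact hd00
    · exact h01c
    · exact h10c
    · exact hd11
  have hdet0 : D.det = 0 := by
    rw [hD, Matrix.det_fin_two_of]
    ring
  refine ⟨D, ⟨hherm, hrep⟩, ?_, hd00, hd11, hmain, fun _ => hdet0⟩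
  rintro D' ⟨-, hD'rep⟩
  have heq : ∀ vv : Fin 2 → k',
      conj (vv 0) * D' 0 0 * vv 0 + conj (vv 0) * D' 0 1 * vv 1 +
        (conj (vv 1) * D' 1 0 * vv 0 + conj (vv 1) * D' 1 1 * vv 1) =
      conj (vv 0) * D 0 0 * vv 0 + conj (vv 0) * D 0 1 * vv 1 +
        (conj (vv 1) * D 1 0 * vv 0 + conj (vv 1) * D 1 1 * vv 1) := by
    intro vv
    have h := (hD'rep vv).symm.trans (hrep vv)
    simpa [Fin.sum_univ_two] using h
  have h00 : D' 0 0 = D 0 0 := by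
    have h := heq ![1, 0]
    simpa using h
  have h11 : D' 1 1 = D 1 1 := by
    have h := heq ![0, 1]
    simpa using h
  have e1 : D' 0 1 + D' 1 0 = D 0 1 + D 1 0 := by
    have h := heq ![1, 1]
    simp only [Matrix.cons_val_zero, Matrix.cons_val_one, Matrix.head_cons, _root_.map_one] at h
    linear_combination h - h00 - h11
  obtain ⟨a, ha⟩ := hconj_ne
  have e2 : D' 0 1 * a + conj a * D' 1 0 = D 0 1 * a + conj a * D 1 0 := by
    have h := heq ![1, a]
    simp only [Matrix.cons_val_zero, Matrix.cons_val_one, Matrix.head_cons, _root_.map_one] at h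
    linear_combination h - h00 - (conj a * a) * h11
  have e3 : D' 0 1 = D 0 1 := by
    have h4 : (D' 0 1 - D 0 1) * (a - conj a) = 0 := by
      linear_combination e2 - conj a * e1
    rcases mul_eq_zero.mp h4 with h5 | h5
    · have := sub_eq_zero.mp h5
      exact this
    · exact absurd (sub_eq_zero.mp h5).symm ha
  have e4 : D' 1 0 = D 1 0 := by linear_combination e1 - e3
  ext i j
  fin_cases i <;> fin_cases j
  · exact h00
  · exact e3
  · exact e4
  · exact h11
end
end
end

section
/- Let n ≥ 2 and let T ∈ M_n(k') be invertible diagonal. Let h = [[a,b],[c,d]] ∈ GL_2(k') satisfy h*·[[0,1],[1,0]]·h = [[0,1],[1,0]], and let h̃ ∈ M_{2n}(k') be the matrix agreeing with the identity matrix except that (h̃)_{n,n} = a, (h̃)_{n,2n} = b, (h̃)_{2n,n} = c, (h̃)_{2n,2n} = d. Then h̃ ∈ U(H_n), and for every x ∈ 𝔛_T: f_{T,n}(h̃·x) = g(x, (d, −c)ᵗ). -/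
open Matrix MeasureTheory
open scoped BigOperators
noncomputable section
open Classical

private lemma ite_ite_same' {α : Type} (c : Prop) [Decidable c] (u v w : α) :
    (if c then (if c then u else v) else w) = if c then u else w := by
  split <;> simp [*]

private lemma ite_ite_same'' {α : Type} (c : Prop) [Decidable c] (u v w : α) :
    (if c then u else (if c then v else w)) = if c then u else w := by
  split <;> simp [*]

private lemma hmat_mul {k' : Type} [Field k'] (n : ℕ)
    (M : Matrix (Fin n ⊕ Fin n) (Fin n ⊕ Fin n) k') :
    Hmat k' n * M = fun i j => M (Sum.elim Sum.inr Sum.inl i) j := by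
  ext i j
  cases i <;>
    simp [Hmat, Matrix.mul_apply, Fintype.sum_sum_type, Matrix.one_apply, ite_mul,
      Finset.sum_ite_eq]

set_option maxHeartbeats 1600000 in
private lemma stmt17_main {k' : Type} [Field k'] (conj : k' ≃+* k')
    (n : ℕ) (hn : 2 ≤ n) (a b c d : k')
    (h00 : conj c * a + conj a * c = 0) (h01 : conj c * b + conj a * d = 1)
    (h10 : conj d * a + conj b * c = 1)
    (hcd : conj b * d + conj d * b = 0)
    (htld : Matrix (Fin n ⊕ Fin n) (Fin n ⊕ Fin n) k')
    (hdef : htld = fun i j =>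
      if i = Sum.inl ⟨n - 1, Nat.sub_lt (by omega) Nat.one_pos⟩ ∧ j = Sum.inl ⟨n - 1, Nat.sub_lt (by omega) Nat.one_pos⟩ then a
      else if i = Sum.inl ⟨n - 1, Nat.sub_lt (by omega) Nat.one_pos⟩ ∧ j = Sum.inr ⟨n - 1, Nat.sub_lt (by omega) Nat.one_pos⟩ then b
      else if i = Sum.inr ⟨n - 1, Nat.sub_lt (by omega) Nat.one_pos⟩ ∧ j = Sum.inl ⟨n - 1, Nat.sub_lt (by omega) Nat.one_pos⟩ then c
      else if i = Sum.inr ⟨n - 1, Nat.sub_lt (by omega) Nat.one_pos⟩ ∧ j = Sum.inr ⟨n - 1, Nat.sub_lt (by omega) Nat.one_pos⟩ then d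
      else (1 : Matrix (Fin n ⊕ Fin n) (Fin n ⊕ Fin n) k') i j) :
    ctr conj htld * Hmat k' n * htld = Hmat k' n := by
  set m : Fin n := ⟨n - 1, by omega⟩ with hmdef
  have hA : ∀ p q : Fin n, htld (Sum.inl p) (Sum.inl q) =
      if p = m ∧ q = m then a else if p = q then 1 else 0 := by
    intro p q; rw [hdef]; simp [Matrix.one_apply]
  have hB : ∀ p q : Fin n, htld (Sum.inl p) (Sum.inr q) =
      if p = m ∧ q = m then b else 0 := by
    intro p q; rw [hdef]; simp [Matrix.one_apply]
  have hC : ∀ p q : Fin n, htld (Sum.inr p) (Sum.inl q) =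
      if p = m ∧ q = m then c else 0 := by
    intro p q; rw [hdef]; simp [Matrix.one_apply]
  have hD : ∀ p q : Fin n, htld (Sum.inr p) (Sum.inr q) =
      if p = m ∧ q = m then d else if p = q then 1 else 0 := by
    intro p q; rw [hdef]; simp [Matrix.one_apply]
  rw [mul_assoc, hmat_mul]
  ext i j
  erw [Matrix.mul_apply]
  simp only [ctr]
  rw [Fintype.sum_sum_type]
  cases i with
  | inl p =>
    cases j with
    | inl q =>
      simp only [Sum.elim_inl, Sum.elim_inr, hA, hB, hC, hD]
      by_cases hp : p = m <;> by_cases hq : q = m <;>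
        · simp [hp, hq, Hmat, apply_ite conj, ite_mul, mul_ite, ite_ite_same', ite_ite_same'',
            Matrix.fromBlocks_apply₁₁, Matrix.one_apply, eq_comm]
          try tauto
          try first
          | linear_combination h00
          | linear_combination -h00
    | inr q =>
      simp only [Sum.elim_inl, Sum.elim_inr, hA, hB, hC, hD]
      by_cases hp : p = m <;> by_cases hq : q = m <;>
        · simp [hp, hq, Hmat, apply_ite conj, ite_mul, mul_ite, ite_ite_same', ite_ite_same'',
            Matrix.fromBlocks_apply₁₂, Matrix.one_apply, eq_comm]
          try tauto
          try first
          | linear_combination h01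
          | linear_combination -h01
  | inr p =>
    cases j with
    | inl q =>
      simp only [Sum.elim_inl, Sum.elim_inr, hA, hB, hC, hD]
      by_cases hp : p = m <;> by_cases hq : q = m <;>
        · simp [hp, hq, Hmat, apply_ite conj, ite_mul, mul_ite, ite_ite_same', ite_ite_same'',
            Matrix.fromBlocks_apply₂₁, Matrix.one_apply, eq_comm]
          try tauto
          try first
          | linear_combination h10
          | linear_combination -h10
    | inr q =>
      simp only [Sum.elim_inl, Sum.elim_inr, hA, hB, hC, hD]
      by_cases hp : p = m <;> by_cases hq : q = m <;>
        · simp [hp, hq, Hmat, apply_ite conj, ite_mul, mul_ite, ite_ite_same', ite_ite_same'',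
            Matrix.fromBlocks_apply₂₂, Matrix.one_apply, eq_comm]
          try tauto
          try first
          | linear_combination hcd
          | linear_combination -hcd

set_option maxHeartbeats 800000 in
private lemma stmt17_key {k' : Type} [Field k'] (conj : k' ≃+* k')
    (n : ℕ) (hn : 2 ≤ n) (a b c d : k')
    (htld : Matrix (Fin n ⊕ Fin n) (Fin n ⊕ Fin n) k')
    (hdef : htld = fun i j =>
      if i = Sum.inl ⟨n - 1, Nat.sub_lt (by omega) Nat.one_pos⟩ ∧ j = Sum.inl ⟨n - 1, Nat.sub_lt (by omega) Nat.one_pos⟩ then a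
      else if i = Sum.inl ⟨n - 1, Nat.sub_lt (by omega) Nat.one_pos⟩ ∧ j = Sum.inr ⟨n - 1, Nat.sub_lt (by omega) Nat.one_pos⟩ then b
      else if i = Sum.inr ⟨n - 1, Nat.sub_lt (by omega) Nat.one_pos⟩ ∧ j = Sum.inl ⟨n - 1, Nat.sub_lt (by omega) Nat.one_pos⟩ then c
      else if i = Sum.inr ⟨n - 1, Nat.sub_lt (by omega) Nat.one_pos⟩ ∧ j = Sum.inr ⟨n - 1, Nat.sub_lt (by omega) Nat.one_pos⟩ then d
      else (1 : Matrix (Fin n ⊕ Fin n) (Fin n ⊕ Fin n) k') i j)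
    (x : Matrix (Fin n ⊕ Fin n) (Fin n) k') :
    lowerBlock (htld * x) = Mxv x ![d, -c] := by
  set m : Fin n := ⟨n - 1, by omega⟩ with hmdef
  have hC : ∀ p q : Fin n, htld (Sum.inr p) (Sum.inl q) =
      if p = m ∧ q = m then c else 0 := by
    intro p q; rw [hdef]; simp [Matrix.one_apply]
  have hD : ∀ p q : Fin n, htld (Sum.inr p) (Sum.inr q) =
      if p = m ∧ q = m then d else if p = q then 1 else 0 := by
    intro p q; rw [hdef]; simp [Matrix.one_apply]
  ext i j
  simp only [lowerBlock, Mxv, Matrix.mul_apply]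
  rw [Fintype.sum_sum_type]
  simp only [hC, hD]
  by_cases hi : i = m
  · subst hi
    have hcoe : ((m : Fin n) : ℕ) = n - 1 := rfl
    have e1 : ∀ k : Fin n, (if m = m ∧ k = m then c else 0) * x (Sum.inl k) j
        = if k = m then c * x (Sum.inl k) j else 0 := by
      intro k; by_cases h : k = m <;> simp [h]
    have e2 : ∀ k : Fin n, (if m = m ∧ k = m then d else if m = k then 1 else 0)
        * x (Sum.inr k) j = if k = m then d * x (Sum.inr k) j else 0 := by
      intro k
      by_cases h : k = m
      · simp [h]
      · have h' : ¬ m = k := fun hh => h hh.symm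
        simp [h, h']
    rw [Finset.sum_congr rfl (fun k _ => e1 k), Finset.sum_congr rfl (fun k _ => e2 k),
      Finset.sum_ite_eq' Finset.univ m, Finset.sum_ite_eq' Finset.univ m,
      if_pos (Finset.mem_univ m), if_pos (Finset.mem_univ m), if_pos hcoe]
    simp only [Matrix.cons_val_zero, Matrix.cons_val_one, Matrix.head_cons]
    ring
  · have hcoe : ¬ ((i : Fin n) : ℕ) = n - 1 := by
      intro h; exact hi (Fin.ext h)
    have e1 : ∀ k : Fin n, (if i = m ∧ k = m then c else 0) * x (Sum.inl k) j = 0 := by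
      intro k; simp [hi]
    have e2 : ∀ k : Fin n, (if i = m ∧ k = m then d else if i = k then 1 else 0)
        * x (Sum.inr k) j = if k = i then x (Sum.inr k) j else 0 := by
      intro k
      by_cases h : k = i
      · subst h; simp [hi]
      · have h' : ¬ i = k := fun hh => h hh.symm
        simp [h, h', hi]
    rw [Finset.sum_congr rfl (fun k _ => e1 k), Finset.sum_congr rfl (fun k _ => e2 k),
      Finset.sum_ite_eq' Finset.univ i, if_pos (Finset.mem_univ i), if_neg hcoe,
      Finset.sum_const_zero, zero_add]

/-- for the embedding `h ↦ h̃` of `U(1,1)` into `U(H_n)`,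
`f_«T,n»(h̃·x) = g(x,(d,−c)ᵗ)`. -/
theorem stmt17
    {k' : Type} [Field k'] [CharZero k']
    (conj : k' ≃+* k') (hinvol : ∀ a, conj (conj a) = a) (hconj_ne : ∃ a, conj a ≠ a)
    (n : ℕ) (hn : 2 ≤ n)
    (t : Fin n → k') (ht0 : ∀ i, t i ≠ 0) (htk : ∀ i, conj (t i) = t i)
    (T : Matrix (Fin n) (Fin n) k') (hT : T = Matrix.diagonal t)
    (a b c d : k')
    (hh : ctr conj !![a, b; c, d] * H1 k' * !![a, b; c, d] = H1 k')
    (hhdet : IsUnit (!![a, b; c, d]).det)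
    (htld : Matrix (Fin n ⊕ Fin n) (Fin n ⊕ Fin n) k')
    (hdef : htld = fun i j =>
      if i = Sum.inl ⟨n - 1, by omega⟩ ∧ j = Sum.inl ⟨n - 1, by omega⟩ then a
      else if i = Sum.inl ⟨n - 1, by omega⟩ ∧ j = Sum.inr ⟨n - 1, by omega⟩ then b
      else if i = Sum.inr ⟨n - 1, by omega⟩ ∧ j = Sum.inl ⟨n - 1, by omega⟩ then c
      else if i = Sum.inr ⟨n - 1, by omega⟩ ∧ j = Sum.inr ⟨n - 1, by omega⟩ then d
      else (1 : Matrix (Fin n ⊕ Fin n) (Fin n ⊕ Fin n) k') i j) :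
    (ctr conj htld * Hmat k' n * htld = Hmat k' n ∧ IsUnit htld.det) ∧
    (∀ x : Matrix (Fin n ⊕ Fin n) (Fin n) k', ctr conj x * Hmat k' n * x = T →
      fTi conj T (htld * x) n le_rfl = gxv conj T x ![d, -c]) := by
  have h00 := congrFun (congrFun hh 0) 0
  have h01 := congrFun (congrFun hh 0) 1
  have h10 := congrFun (congrFun hh 1) 0
  have h11 := congrFun (congrFun hh 1) 1
  simp only [ctr, H1, Matrix.mul_apply, Fin.sum_univ_two, Matrix.of_apply,
    Matrix.cons_val', Matrix.cons_val_zero, Matrix.cons_val_one, Matrix.head_cons,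
    Matrix.empty_val', Matrix.cons_val_fin_one, Matrix.head_fin_const,
    zero_mul, mul_zero, mul_one, one_mul, zero_add, add_zero] at h00 h01 h10 h11
  have main := stmt17_main conj n hn a b c d h00 h01 h10
    (by linear_combination h11) htld hdef
  refine ⟨⟨main, ?_⟩, ?_⟩
  · have hH2 : Hmat k' n * Hmat k' n = 1 := by
      simp [Hmat, Matrix.fromBlocks_multiply, ← Matrix.fromBlocks_one]
    have hdet : (ctr conj htld).det * (Hmat k' n).det * htld.det = (Hmat k' n).det := by
      rw [← Matrix.det_mul, ← Matrix.det_mul, main]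
    have hdH : (Hmat k' n).det * (Hmat k' n).det = 1 := by
      rw [← Matrix.det_mul, hH2, Matrix.det_one]
    have hkey : htld.det * (ctr conj htld).det = 1 := by
      linear_combination (Hmat k' n).det * hdet + (1 - htld.det * (ctr conj htld).det) * hdH
    exact IsUnit.of_mul_eq_one _ hkey
  · intro x _
    have key := stmt17_key conj n hn a b c d htld hdef x
    have hsub : ∀ y : Matrix (Fin n) (Fin n) k',
        y.submatrix (Fin.castLE (le_refl n)) (Fin.castLE (le_refl n)) = y := by
      intro y; ext i j; simp [Matrix.submatrix, Fin.castLE]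
    rw [fTi, dmin, hsub, key, gxv]
end
end

section
/- For every invertible hermitian T ∈ M_n(k'), the set 𝔛_T(O_{k'}) := 𝔛_T ∩ M_{2n,n}(O_{k'}) is a finite (possibly empty) union of K-orbits: there exist finitely many x_1,…,x_r ∈ 𝔛_T(O_{k'}) such that 𝔛_T(O_{k'}) = K·x_1 ∪ ⋯ ∪ K·x_r. -/
open Matrix
noncomputable section

/-- `K = U(H_n) ∩ GL_{2n}(O_{k'})`. -/
def inK {k' : Type} [Field k'] (conj : k' ≃+* k') (v : k' → ℤ) {n : ℕ}
    (g : Matrix (Fin n ⊕ Fin n) (Fin n ⊕ Fin n) k') : Prop :=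
  (∀ i j, g i j = 0 ∨ 0 ≤ v (g i j)) ∧
    ctr conj g * Hmat k' n * g = Hmat k' n ∧ IsUnit g.det

/-- `𝔛_T(O_{k'})` : integral points of `𝔛_T`. -/
def inXTO {k' : Type} [Field k'] (conj : k' ≃+* k') (v : k' → ℤ) {n : ℕ}
    (T : Matrix (Fin n) (Fin n) k') (x : Matrix (Fin n ⊕ Fin n) (Fin n) k') : Prop :=
  (∀ i j, x i j = 0 ∨ 0 ≤ v (x i j)) ∧ ctr conj x * Hmat k' n * x = T

namespace S19

variable {k' : Type} [Field k']

/-! ### Scalar valuation facts -/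

/-- `π^m` divides `a`. -/
def Dv (v : k' → ℤ) (m : ℤ) (a : k') : Prop := a = 0 ∨ m ≤ v a

section scalar

variable (v : k' → ℤ)

/-- Abbreviation for the multiplicativity hypothesis. -/
def Hmul (v : k' → ℤ) : Prop := ∀ a b : k', a ≠ 0 → b ≠ 0 → v (a * b) = v a + v b

/-- Abbreviation for the ultrametric hypothesis. -/
def Hadd (v : k' → ℤ) : Prop :=
  ∀ a b : k', a ≠ 0 → b ≠ 0 → a + b ≠ 0 → min (v a) (v b) ≤ v (a + b)

theorem v_one (hvmul : Hmul v) : v 1 = 0 := by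
  have := hvmul 1 1 one_ne_zero one_ne_zero
  rw [mul_one] at this; omega

theorem v_neg (hvmul : Hmul v) (a : k') (ha : a ≠ 0) : v (-a) = v a := by
  have h1 : v (-1 : k') = 0 := by
    have := hvmul (-1 : k') (-1) (by norm_num) (by norm_num)
    rw [neg_mul_neg, one_mul, v_one v hvmul] at this; omega
  have := hvmul (-1 : k') a (by norm_num) ha
  rw [neg_one_mul] at this; omega

theorem Dv_zero (m : ℤ) : Dv v m 0 := Or.inl rfl

theorem Dv_one (hvmul : Hmul v) : Dv v 0 1 := Or.inr (le_of_eq (v_one v hvmul).symm)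

theorem Dv_mono {m m' : ℤ} {a : k'} (h : m' ≤ m) (hd : Dv v m a) : Dv v m' a :=
  hd.imp id (fun h2 => le_trans h h2)

theorem Dv_neg (hvmul : Hmul v) {m : ℤ} {a : k'} (hd : Dv v m a) : Dv v m (-a) := by
  rcases hd with rfl | h
  · exact Or.inl neg_zero
  · rcases eq_or_ne a 0 with rfl | ha
    · exact Or.inl neg_zero
    · exact Or.inr (by rw [v_neg v hvmul a ha]; exact h)

theorem Dv_add (hvadd : Hadd v) {m : ℤ} {a b : k'} (hda : Dv v m a) (hdb : Dv v m b) :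
    Dv v m (a + b) := by
  rcases hda with rfl | ha
  · rwa [zero_add]
  rcases hdb with rfl | hb
  · rcases eq_or_ne a 0 with rfl | ha0
    · exact Or.inl (by ring)
    · exact Or.inr (by rwa [add_zero])
  rcases eq_or_ne a 0 with rfl | ha0
  · rcases eq_or_ne b 0 with rfl | hb0
    · exact Or.inl (by ring)
    · exact Or.inr (by rwa [zero_add])
  rcases eq_or_ne b 0 with rfl | hb0
  · exact Or.inr (by rwa [add_zero])
  rcases eq_or_ne (a + b) 0 with h0 | h0
  · exact Or.inl h0
  · exact Or.inr (le_trans (le_min ha hb) (hvadd a b ha0 hb0 h0))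

theorem Dv_sub (hvmul : Hmul v) (hvadd : Hadd v) {m : ℤ} {a b : k'}
    (hda : Dv v m a) (hdb : Dv v m b) : Dv v m (a - b) := by
  rw [sub_eq_add_neg]; exact Dv_add v hvadd hda (Dv_neg v hvmul hdb)

theorem Dv_mul (hvmul : Hmul v) {m l : ℤ} {a b : k'} (hda : Dv v m a) (hdb : Dv v l b) :
    Dv v (m + l) (a * b) := by
  rcases hda with rfl | ha
  · exact Or.inl (zero_mul b)
  rcases hdb with rfl | hb
  · exact Or.inl (mul_zero a)
  rcases eq_or_ne a 0 with rfl | ha0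
  · exact Or.inl (zero_mul b)
  rcases eq_or_ne b 0 with rfl | hb0
  · exact Or.inl (mul_zero a)
  exact Or.inr (by rw [hvmul a b ha0 hb0]; omega)

theorem Dv_sum (hvadd : Hadd v) {m : ℤ} {ι : Type} (s : Finset ι) (f : ι → k')
    (h : ∀ i ∈ s, Dv v m (f i)) : Dv v m (s.sum f) := by
  classical
  induction s using Finset.induction_on with
  | empty => simpa using Dv_zero v m
  | insert i s0 hni ih =>
    rw [Finset.sum_insert hni]
    exact Dv_add v hvadd (h i (Finset.mem_insert_self i s0))
      (ih fun j hj => h j (Finset.mem_insert_of_mem hj))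

theorem Dv_all {a : k'} (h : ∀ m : ℕ, Dv v (m : ℤ) a) : a = 0 := by
  by_contra ha
  have := h ((v a).toNat + 1)
  rcases this with h0 | h0
  · exact ha h0
  · have := Int.self_le_toNat (v a); push_cast at h0; omega

theorem Dv_conj (conj : k' ≃+* k') (hvconj : ∀ a, v (conj a) = v a)
    {m : ℤ} {a : k'} (hd : Dv v m a) : Dv v m (conj a) := by
  rcases hd with rfl | h
  · exact Or.inl (map_zero conj)
  · exact Or.inr (by rwa [hvconj])

end scalar

/-! ### Conjugate-transpose facts -/

section matrices
variable (conj : k' ≃+* k')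
variable {I J L : Type}

theorem ctr_apply (A : Matrix I J k') (i : J) (j : I) :
    ctr conj A i j = conj (A j i) := rfl

theorem ctr_add (A B : Matrix I J k') : ctr conj (A + B) = ctr conj A + ctr conj B := by
  funext i j; simp [ctr]

theorem ctr_sub (A B : Matrix I J k') : ctr conj (A - B) = ctr conj A - ctr conj B := by
  funext i j; simp [ctr]

theorem ctr_neg (A : Matrix I J k') : ctr conj (-A) = -(ctr conj A) := by
  funext i j; simp [ctr]

theorem ctr_ctr (hinvol : ∀ a, conj (conj a) = a) (A : Matrix I J k') :
    ctr conj (ctr conj A) = A := by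
  funext i j; simp [ctr, hinvol]

theorem ctr_one [Fintype I] [DecidableEq I] : ctr conj (1 : Matrix I I k') = 1 := by
  funext i j
  simp only [ctr, Matrix.one_apply]
  by_cases h : j = i
  · subst h; simp
  · rw [if_neg h, if_neg (Ne.symm h), map_zero]

theorem ctr_mul [Fintype J] (A : Matrix I J k') (B : Matrix J L k') :
    ctr conj (A * B) = ctr conj B * ctr conj A := by
  funext i j
  simp [ctr, Matrix.mul_apply, map_sum, mul_comm]

variable {n : ℕ}

theorem Hmat_mul_Hmat : Hmat k' n * Hmat k' n = 1 := by
  simp [Hmat, Matrix.fromBlocks_multiply, ← Matrix.fromBlocks_one]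

theorem ctr_Hmat : ctr conj (Hmat k' n) = Hmat k' n := by
  funext i j
  rcases i with i | i <;> rcases j with j | j <;>
    simp [ctr, Hmat, Matrix.one_apply, apply_ite, eq_comm]

end matrices

/-! ### Matrix-level divisibility -/

/-- matrix-level divisibility -/
def MDv (v : k' → ℤ) (m : ℤ) {I J : Type} (A : Matrix I J k') : Prop :=
  ∀ i j, Dv v m (A i j)

section mdv

variable (v : k' → ℤ) {I J L : Type}

theorem MDv_mono {m m' : ℤ} {A : Matrix I J k'} (h : m' ≤ m) (hd : MDv v m A) :
    MDv v m' A := fun i j => Dv_mono v h (hd i j)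

theorem MDv_zero (m : ℤ) : MDv v m (0 : Matrix I J k') := fun _ _ => Dv_zero v m

theorem MDv_add (hvadd : Hadd v) {m : ℤ} {A B : Matrix I J k'}
    (hA : MDv v m A) (hB : MDv v m B) : MDv v m (A + B) :=
  fun i j => by
    have := Dv_add v hvadd (hA i j) (hB i j)
    simpa using this

theorem MDv_neg (hvmul : Hmul v) {m : ℤ} {A : Matrix I J k'} (hA : MDv v m A) :
    MDv v m (-A) := fun i j => by
  have := Dv_neg v hvmul (hA i j); simpa using this

theorem MDv_sub (hvmul : Hmul v) (hvadd : Hadd v) {m : ℤ} {A B : Matrix I J k'}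
    (hA : MDv v m A) (hB : MDv v m B) : MDv v m (A - B) :=
  fun i j => by
    have := Dv_sub v hvmul hvadd (hA i j) (hB i j)
    simpa using this

theorem MDv_mul (hvmul : Hmul v) (hvadd : Hadd v) [Fintype J] {m l : ℤ}
    {A : Matrix I J k'} {B : Matrix J L k'} (hA : MDv v m A) (hB : MDv v l B) :
    MDv v (m + l) (A * B) := fun i j => by
  rw [Matrix.mul_apply]
  exact Dv_sum v hvadd _ _ fun s _ => Dv_mul v hvmul (hA i s) (hB s j)

theorem MDv_ctr (conj : k' ≃+* k') (hvconj : ∀ a, v (conj a) = v a) {m : ℤ}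
    {A : Matrix I J k'} (hA : MDv v m A) : MDv v m (ctr conj A) :=
  fun i j => Dv_conj v conj hvconj (hA j i)

theorem MDv_one (hvmul : Hmul v) [DecidableEq I] {m : ℤ} (hm : m ≤ 0) :
    MDv v m (1 : Matrix I I k') := fun i j => by
  rw [Matrix.one_apply]
  by_cases h : i = j
  · rw [if_pos h]; exact Dv_mono v hm (Dv_one v hvmul)
  · rw [if_neg h]; exact Dv_zero v m

theorem MDv_Hmat (hvmul : Hmul v) {n : ℕ} {m : ℤ} (hm : m ≤ 0) :
    MDv v m (Hmat k' n) := fun i j => by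
  rcases i with i | i <;> rcases j with j | j <;>
    simp only [Hmat, Matrix.fromBlocks_apply₁₁, Matrix.fromBlocks_apply₁₂,
      Matrix.fromBlocks_apply₂₁, Matrix.fromBlocks_apply₂₂, Matrix.zero_apply,
      Matrix.one_apply]
  · exact Dv_zero v m
  · by_cases h : i = j
    · rw [if_pos h]; exact Dv_mono v hm (Dv_one v hvmul)
    · rw [if_neg h]; exact Dv_zero v m
  · by_cases h : i = j
    · rw [if_pos h]; exact Dv_mono v hm (Dv_one v hvmul)
    · rw [if_neg h]; exact Dv_zero v m
  · exact Dv_zero v m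

end mdv

end S19
namespace S19
variable {k' : Type} [Field k']

/-! ### Residue representatives -/

section rep

/-- residue representative -/
def rep (v : k' → ℤ) (S : Finset k')
    (hS : ∀ a : k', (a = 0 ∨ 0 ≤ v a) → ∃! b, b ∈ S ∧ (a - b = 0 ∨ 1 ≤ v (a - b)))
    (a : k') : k' :=
  haveI := Classical.propDecidable (a = 0 ∨ 0 ≤ v a)
  if h : (a = 0 ∨ 0 ≤ v a) then (hS a h).exists.choose else 0

variable (v : k' → ℤ) (S : Finset k')
variable (hS : ∀ a : k', (a = 0 ∨ 0 ≤ v a) → ∃! b, b ∈ S ∧ (a - b = 0 ∨ 1 ≤ v (a - b)))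

theorem rep_spec {a : k'} (h : Dv v 0 a) :
    rep v S hS a ∈ S ∧ Dv v 1 (a - rep v S hS a) := by
  have h' : (a = 0 ∨ 0 ≤ v a) := h
  rw [rep, dif_pos h']
  exact (hS a h').exists.choose_spec

theorem rep_int (hvmul : Hmul v) (hvadd : Hadd v) {a : k'} (h : Dv v 0 a) :
    Dv v 0 (rep v S hS a) := by
  have h2 := (rep_spec v S hS h).2
  have : rep v S hS a = a - (a - rep v S hS a) := by ring
  rw [this]
  exact Dv_sub v hvmul hvadd h (Dv_mono v (by norm_num) h2)

theorem rep_congr (hvmul : Hmul v) (hvadd : Hadd v) {a a' : k'}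
    (ha : Dv v 0 a) (ha' : Dv v 0 a') (hcl : Dv v 1 (a - a')) :
    rep v S hS a = rep v S hS a' := by
  have h1 := rep_spec v S hS ha
  have h2 := rep_spec v S hS ha'
  have key : a - rep v S hS a' = (a - a') + (a' - rep v S hS a') := by ring
  have h3 : Dv v 1 (a - rep v S hS a') := by rw [key]; exact Dv_add v hvadd hcl h2.2
  exact ((hS a ha).unique ⟨h1.1, h1.2⟩ ⟨h2.1, h3⟩)

theorem rep_self (hvmul : Hmul v) {b : k'} (hb : b ∈ S) (hint : Dv v 0 b) :
    rep v S hS b = b := by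
  have h1 := rep_spec v S hS hint
  exact ((hS b hint).unique ⟨h1.1, h1.2⟩ ⟨hb, Or.inl (sub_self b)⟩)

end rep

/-! ### Representatives in the fixed field -/

section repk

/-- residue representative in the fixed field -/
def repk (v : k' → ℤ) (conj : k' ≃+* k') (S : Finset k')
    (hS : ∀ a : k', conj a = a → (a = 0 ∨ 0 ≤ v a) →
      ∃! b, b ∈ S ∧ (a - b = 0 ∨ 1 ≤ v (a - b)))
    (a : k') : k' :=
  haveI := Classical.propDecidable (conj a = a ∧ (a = 0 ∨ 0 ≤ v a))
  if h : conj a = a ∧ (a = 0 ∨ 0 ≤ v a) then (hS a h.1 h.2).exists.choose else 1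

variable (v : k' → ℤ) (conj : k' ≃+* k') (S : Finset k')
variable (hS : ∀ a : k', conj a = a → (a = 0 ∨ 0 ≤ v a) →
  ∃! b, b ∈ S ∧ (a - b = 0 ∨ 1 ≤ v (a - b)))

theorem repk_spec {a : k'} (hfix : conj a = a) (h : Dv v 0 a) :
    repk v conj S hS a ∈ S ∧ Dv v 1 (a - repk v conj S hS a) := by
  have h' : conj a = a ∧ (a = 0 ∨ 0 ≤ v a) := ⟨hfix, h⟩
  rw [repk, dif_pos h']
  exact (hS a h'.1 h'.2).exists.choose_spec

theorem repk_int (hvmul : Hmul v) (hvadd : Hadd v) {a : k'} (hfix : conj a = a)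
    (h : Dv v 0 a) : Dv v 0 (repk v conj S hS a) := by
  have h2 := (repk_spec v conj S hS hfix h).2
  have : repk v conj S hS a = a - (a - repk v conj S hS a) := by ring
  rw [this]
  exact Dv_sub v hvmul hvadd h (Dv_mono v (by norm_num) h2)

theorem repk_congr (hvmul : Hmul v) (hvadd : Hadd v) {a a' : k'}
    (hfa : conj a = a) (hfa' : conj a' = a')
    (ha : Dv v 0 a) (ha' : Dv v 0 a') (hcl : Dv v 1 (a - a')) :
    repk v conj S hS a = repk v conj S hS a' := by
  have h1 := repk_spec v conj S hS hfa ha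
  have h2 := repk_spec v conj S hS hfa' ha'
  have key : a - repk v conj S hS a' = (a - a') + (a' - repk v conj S hS a') := by ring
  have h3 : Dv v 1 (a - repk v conj S hS a') := by rw [key]; exact Dv_add v hvadd hcl h2.2
  exact ((hS a hfa ha).unique ⟨h1.1, h1.2⟩ ⟨h2.1, h3⟩)

theorem repk_self (hvmul : Hmul v) {b : k'} (hb : b ∈ S) (hfix : conj b = b)
    (hint : Dv v 0 b) : repk v conj S hS b = b := by
  have h1 := repk_spec v conj S hS hfix hint
  exact ((hS b hfix hint).unique ⟨h1.1, h1.2⟩ ⟨hb, Or.inl (sub_self b)⟩)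

end repk

end S19
namespace S19
variable {k' : Type} [Field k']

section theta
variable (conj : k' ≃+* k') (v : k' → ℤ)

theorem v_pow (hvmul : Hmul v) {a : k'} (ha : a ≠ 0) (i : ℕ) : v (a ^ i) = i * v a := by
  induction i with
  | zero => simpa using v_one v hvmul
  | succ i ih =>
    rw [pow_succ, hvmul _ _ (pow_ne_zero i ha) ha, ih]; push_cast; ring

theorem v_inv (hvmul : Hmul v) {a : k'} (ha : a ≠ 0) : v a⁻¹ = - v a := by
  have := hvmul a a⁻¹ ha (inv_ne_zero ha)
  rw [mul_inv_cancel₀ ha, v_one v hvmul] at this; omega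

/-- In the situation of the theorem, there is an integral element of trace `1`. -/
theorem exists_theta [CharZero k']
    (hinvol : ∀ a, conj (conj a) = a) (hconj_ne : ∃ a, conj a ≠ a)
    (hv0 : v 0 = 0) (hvmul : Hmul v) (hvadd : Hadd v)
    (hvconj : ∀ a, v (conj a) = v a)
    (π : k') (hπk : conj π = π) (hπv : v π = 1)
    (hres : ∃ S : Finset k',
      ∀ a : k', (a = 0 ∨ 0 ≤ v a) → ∃! b, b ∈ S ∧ (a - b = 0 ∨ 1 ≤ v (a - b)))
    (hresk : ∃ S : Finset k', (∀ b ∈ S, conj b = b) ∧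
      ∀ a : k', conj a = a → (a = 0 ∨ 0 ≤ v a) → ∃! b, b ∈ S ∧ (a - b = 0 ∨ 1 ≤ v (a - b)))
    (hcomplete : ∀ f : ℕ → k',
      (∀ m : ℕ, ∃ N : ℕ, ∀ i ≥ N, ∀ j ≥ N, f i - f j = 0 ∨ (m : ℤ) ≤ v (f i - f j)) →
      ∃ L : k', ∀ m : ℕ, ∃ N : ℕ, ∀ i ≥ N, f i - L = 0 ∨ (m : ℤ) ≤ v (f i - L)) :
    ∃ θ : k', Dv v 0 θ ∧ θ + conj θ = 1 := by
  classical
  have hπ0 : π ≠ 0 := fun h => by rw [h, hv0] at hπv; exact one_ne_zero hπv.symm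
  by_cases hU : ∃ α : k', Dv v 0 α ∧ α + conj α ≠ 0 ∧ v (α + conj α) = 0
  · obtain ⟨α, hαO, hτ0, hτv⟩ := hU
    set τ := α + conj α with hτ
    have hτfix : conj τ = τ := by rw [hτ, map_add, hinvol, add_comm]
    refine ⟨α * τ⁻¹, ?_, ?_⟩
    · have hα0 : α ≠ 0 := by
        rintro rfl; exact hτ0 (by rw [hτ, map_zero, add_zero])
      right
      rw [hvmul α τ⁻¹ hα0 (inv_ne_zero hτ0), v_inv v hvmul hτ0, hτv]
      rcases hαO with h | h
      · exact absurd h hα0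
      · omega
    · have : conj (α * τ⁻¹) = conj α * τ⁻¹ := by
        rw [_root_.map_mul, map_inv₀, hτfix]
      rw [this, ← add_mul, ← hτ, mul_inv_cancel₀ hτ0]
  -- no unit traces : derive a contradiction
  push_neg at hU
  exfalso
  have key1 : ∀ α : k', Dv v 0 α → Dv v 1 (α + conj α) := by
    intro α hα
    rcases eq_or_ne (α + conj α) 0 with h0 | h0
    · exact Or.inl h0
    · have hint : Dv v 0 (α + conj α) :=
        Dv_add v hvadd hα (Dv_conj v conj hvconj hα)
      have := hU α hα h0
      rcases hint with h | h
      · exact absurd h h0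
      · right; omega
  have h2ne : (2 : k') ≠ 0 := two_ne_zero
  have hv2 : 1 ≤ v 2 := by
    have := key1 1 (Dv_one v hvmul)
    rw [_root_.map_one] at this
    have h11 : (1 : k') + 1 = 2 := by norm_num
    rw [h11] at this
    rcases this with h | h
    · exact absurd h h2ne
    · exact h
  have hDv2 : Dv v 1 (2 : k') := Or.inr hv2
  -- existence of β whose residue class contains no fixed element
  have hβ : ∃ β, Dv v 0 β ∧ ∀ c, conj c = c → Dv v 0 c → ¬ Dv v 1 (β - c) := by
    by_contra hf
    push_neg at hf
    -- every integral element is congruent mod π to a fixed one; conclude conj = id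
    have hOfix : ∀ α, Dv v 0 α → conj α = α := by
      intro α hα
      have hstep : ∀ β, Dv v 0 β → ∃ c, conj c = c ∧ Dv v 0 c ∧ Dv v 1 (β - c) := by
        intro β hβ'
        obtain ⟨c, hc1, hc2, hc3⟩ := hf β hβ'
        exact ⟨c, hc1, hc2, hc3⟩
      set cc : k' → k' := fun β =>
        if h : Dv v 0 β then (hstep β h).choose else 0 with hccdef
      have hcc : ∀ β (h : Dv v 0 β),
          conj (cc β) = cc β ∧ Dv v 0 (cc β) ∧ Dv v 1 (β - cc β) := by
        intro β h
        rw [hccdef]; simp only [dif_pos h]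
        exact (hstep β h).choose_spec
      set tl : k' → k' := fun β => (β - cc β) * π⁻¹ with htldef
      have htl_int : ∀ β, Dv v 0 β → Dv v 0 (tl β) := by
        intro β h
        rcases (hcc β h).2.2 with h0 | h0
        · rw [htldef]; simp only; rw [h0, zero_mul]; exact Dv_zero v 0
        · right
          have hne : β - cc β ≠ 0 := by
            intro hc; rw [hc, hv0] at h0; omega
          rw [htldef]; simp only
          rw [hvmul _ _ hne (inv_ne_zero hπ0), v_inv v hvmul hπ0, hπv]; omega
      have hdecomp : ∀ β, Dv v 0 β → β = cc β + π * tl β := by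
        intro β h
        rw [htldef]; simp only
        rw [mul_comm (β - cc β) π⁻¹, ← mul_assoc, mul_inv_cancel₀ hπ0, one_mul]
        ring
      have hiter_int : ∀ i, Dv v 0 (tl^[i] α) := by
        intro i
        induction i with
        | zero => simpa using hα
        | succ i ih => rw [Function.iterate_succ_apply']; exact htl_int _ ih
      set p : ℕ → k' := fun m => ∑ i ∈ Finset.range m, cc (tl^[i] α) * π ^ i with hpdef
      have hDpi : ∀ i : ℕ, Dv v i (π ^ i) :=
        fun i => Or.inr (le_of_eq (by rw [v_pow v hvmul hπ0, hπv, mul_one]))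
      have hterm_int : ∀ i : ℕ, Dv v i (cc (tl^[i] α) * π ^ i) := by
        intro i
        have := Dv_mul v hvmul ((hcc _ (hiter_int i)).2.1) (hDpi i)
        simpa using this
      have halpha : ∀ m, α = p m + π ^ m * tl^[m] α := by
        intro m
        induction m with
        | zero => simp [hpdef]
        | succ m ih =>
          rw [hpdef]; simp only
          rw [Finset.sum_range_succ]
          have hit : tl^[m + 1] α = tl (tl^[m] α) := Function.iterate_succ_apply' tl m α
          rw [hit]
          have hd := hdecomp (tl^[m] α) (hiter_int m)
          calc α = p m + π ^ m * tl^[m] α := ih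
            _ = p m + π ^ m * (cc (tl^[m] α) + π * tl (tl^[m] α)) := by rw [← hd]
            _ = (p m + cc (tl^[m] α) * π ^ m) + π ^ (m + 1) * tl (tl^[m] α) := by ring
      have hp_diff : ∀ j d : ℕ, Dv v j (p (j + d) - p j) := by
        intro j d
        induction d with
        | zero => rw [Nat.add_zero, sub_self]; exact Dv_zero v j
        | succ d ih =>
          have hsplit : p (j + (d+1)) - p j
              = (p (j + d + 1) - p (j + d)) + (p (j + d) - p j) := by
            have : j + (d + 1) = j + d + 1 := by omega
            rw [this]; ring
          rw [hsplit]
          refine Dv_add v hvadd ?_ ih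
          have hsingle : p (j + d + 1) - p (j + d) = cc (tl^[j+d] α) * π ^ (j + d) := by
            rw [hpdef]; simp only
            rw [Finset.sum_range_succ]; ring
          rw [hsingle]
          exact Dv_mono v (by push_cast; omega) (hterm_int (j + d))
      have hp_cauchy : ∀ (i j m : ℕ), m ≤ i → m ≤ j → Dv v m (p i - p j) := by
        intro i j m hi hj
        rcases le_total j i with h | h
        · obtain ⟨d, rfl⟩ := Nat.exists_eq_add_of_le h
          exact Dv_mono v (by push_cast; omega) (hp_diff j d)
        · obtain ⟨d, rfl⟩ := Nat.exists_eq_add_of_le h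
          have := Dv_neg v hvmul (hp_diff i d)
          rw [neg_sub] at this
          exact Dv_mono v (by push_cast; omega) this
      obtain ⟨L, hL⟩ := hcomplete p (by
        intro m
        exact ⟨m, fun i hi j hj => hp_cauchy i j m hi hj⟩)
      have hpfix : ∀ m, conj (p m) = p m := by
        intro m; rw [hpdef]; simp only
        rw [map_sum]
        apply Finset.sum_congr rfl
        intro i _
        rw [_root_.map_mul, _root_.map_pow, hπk, (hcc _ (hiter_int i)).1]
      have hLa : α = L := by
        have hsmall : ∀ m : ℕ, Dv v m (α - L) := by
          intro m
          obtain ⟨N, hN⟩ := hL m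
          set i := m + N with hidef
          have h1 : Dv v m (p i - L) := hN i (by omega)
          have h2 : Dv v m (α - p i) := by
            rw [halpha i]
            have heq : p i + π ^ i * tl^[i] α - p i = π ^ i * tl^[i] α := by ring
            rw [heq]
            have := Dv_mul v hvmul (hDpi i) (hiter_int i)
            have h3 : Dv v (i : ℤ) (π ^ i * tl^[i] α) := by simpa using this
            exact Dv_mono v (by omega) h3
          have heq : α - L = (α - p i) + (p i - L) := by ring
          rw [heq]
          exact Dv_add v hvadd h2 h1
        exact sub_eq_zero.mp (Dv_all v hsmall)
      have hLfix : conj L = L := by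
        have hsmall : ∀ m : ℕ, Dv v m (conj L - L) := by
          intro m
          obtain ⟨N, hN⟩ := hL m
          have h1 : Dv v m (p N - L) := hN N le_rfl
          have h2 : Dv v m (conj L - p N) := by
            have h3 : Dv v m (L - p N) := by
              have := Dv_neg v hvmul h1; rwa [neg_sub] at this
            have := Dv_conj v conj hvconj h3
            rwa [map_sub, hpfix] at this
          have heq : conj L - L = (conj L - p N) + (p N - L) := by ring
          rw [heq]
          exact Dv_add v hvadd h2 h1
        exact sub_eq_zero.mp (Dv_all v hsmall)
      rw [hLa]; exact hLfix
    -- conj = id on O gives conj = id everywhere ; contradiction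
    obtain ⟨a₀, ha₀⟩ := hconj_ne
    have ha00 : a₀ ≠ 0 := fun h => ha₀ (by rw [h, map_zero])
    set s := (v a₀).natAbs with hsdef
    have hsa : π ^ s * a₀ ≠ 0 := mul_ne_zero (pow_ne_zero s hπ0) ha00
    have hsint : Dv v 0 (π ^ s * a₀) := by
      right
      rw [hvmul _ _ (pow_ne_zero s hπ0) ha00, v_pow v hvmul hπ0, hπv]
      omega
    have heq := hOfix _ hsint
    rw [_root_.map_mul, _root_.map_pow, hπk] at heq
    exact ha₀ (mul_left_cancel₀ (pow_ne_zero s hπ0) heq)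
  -- now the counting argument
  obtain ⟨β, hβO, hβne⟩ := hβ
  obtain ⟨S, hSrep⟩ := hres
  obtain ⟨S', hS'fix, hS'rep⟩ := hresk
  set DD := S.filter (fun b => rep v S hSrep b = b) with hDDdef
  set DK := S'.filter (fun b => repk v conj S' hS'rep b = b) with hDKdef
  have hDD_int : ∀ b ∈ DD, Dv v 0 b := by
    intro b hb
    rw [hDDdef, Finset.mem_filter] at hb
    by_cases h : (b = 0 ∨ 0 ≤ v b)
    · exact h
    · exfalso
      have : rep v S hSrep b = 0 := by rw [rep, dif_neg h]
      rw [hb.2] at this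
      exact h (Or.inl this)
  have hDK_int : ∀ b ∈ DK, Dv v 0 b := by
    intro b hb
    rw [hDKdef, Finset.mem_filter] at hb
    by_cases h : conj b = b ∧ (b = 0 ∨ 0 ≤ v b)
    · exact h.2
    · exfalso
      have : repk v conj S' hS'rep b = 1 := by rw [repk, dif_neg h]
      rw [hb.2] at this
      exact h ⟨by rw [this, _root_.map_one], by rw [this]; exact Dv_one v hvmul⟩
  have hDK_fix : ∀ b ∈ DK, conj b = b := by
    intro b hb
    rw [hDKdef, Finset.mem_filter] at hb
    exact hS'fix b hb.1
  have hNfix : ∀ b : k', conj (conj b * b) = conj b * b := by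
    intro b; rw [_root_.map_mul, hinvol, mul_comm]
  have hNint : ∀ b : k', Dv v 0 b → Dv v 0 (conj b * b) := by
    intro b hb
    have := Dv_mul v hvmul (Dv_conj v conj hvconj hb) hb
    simpa using this
  set F : k' → k' := fun b => repk v conj S' hS'rep (conj b * b) with hFdef
  have hFS' : ∀ b, Dv v 0 b → F b ∈ S' ∧ Dv v 1 (conj b * b - F b) :=
    fun b hb => repk_spec v conj S' hS'rep (hNfix b) (hNint b hb)
  have hFmem : ∀ b ∈ DD, F b ∈ DK := by
    intro b hb
    have hbint := hDD_int b hb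
    have h1 := hFS' b hbint
    rw [hDKdef, Finset.mem_filter]
    refine ⟨h1.1, ?_⟩
    apply repk_self v conj S' hS'rep hvmul h1.1 (hS'fix _ h1.1)
    have : F b = conj b * b - (conj b * b - F b) := by ring
    rw [this]
    exact Dv_sub v hvmul hvadd (hNint b hbint) (Dv_mono v (by norm_num) h1.2)
  have hFinj : ∀ b₁ ∈ DD, ∀ b₂ ∈ DD, F b₁ = F b₂ → b₁ = b₂ := by
    intro b₁ hb₁ b₂ hb₂ hFeq
    have h₁ := hDD_int b₁ hb₁
    have h₂ := hDD_int b₂ hb₂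
    have hN12 : Dv v 1 (conj b₁ * b₁ - conj b₂ * b₂) := by
      have := Dv_sub v hvmul hvadd (hFS' b₁ h₁).2 (hFS' b₂ h₂).2
      rw [hFeq] at this
      have heq : conj b₁ * b₁ - F b₂ - (conj b₂ * b₂ - F b₂)
          = conj b₁ * b₁ - conj b₂ * b₂ := by ring
      rwa [heq] at this
    have hsq : Dv v 1 (b₁ * b₁ - b₂ * b₂) := by
      have e1 : b₁ * b₁ - b₂ * b₂
          = ((b₁ + conj b₁) * b₁ - (b₂ + conj b₂) * b₂) - (conj b₁ * b₁ - conj b₂ * b₂) := by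
        ring
      rw [e1]
      refine Dv_sub v hvmul hvadd (Dv_sub v hvmul hvadd ?_ ?_) hN12
      · have := Dv_mul v hvmul (key1 b₁ h₁) h₁; simpa using this
      · have := Dv_mul v hvmul (key1 b₂ h₂) h₂; simpa using this
    have hd2 : Dv v 1 ((b₁ - b₂) * (b₁ - b₂)) := by
      have e2 : (b₁ - b₂) * (b₁ - b₂) = (b₁ * b₁ - b₂ * b₂) + 2 * (b₂ * (b₂ - b₁)) := by
        ring
      rw [e2]
      refine Dv_add v hvadd hsq ?_
      have hint : Dv v 0 (b₂ * (b₂ - b₁)) := by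
        have := Dv_mul v hvmul h₂ (Dv_sub v hvmul hvadd h₂ h₁); simpa using this
      have := Dv_mul v hvmul hDv2 hint
      simpa using this
    have hd1 : Dv v 1 (b₁ - b₂) := by
      rcases eq_or_ne (b₁ - b₂) 0 with h0 | h0
      · exact Or.inl h0
      · right
        rcases hd2 with h | h
        · exact absurd (mul_self_eq_zero.mp h) h0
        · rw [hvmul _ _ h0 h0] at h; omega
    have hρeq : rep v S hSrep b₁ = rep v S hSrep b₂ := rep_congr v S hSrep hvmul hvadd h₁ h₂ hd1
    rw [hDDdef, Finset.mem_filter] at hb₁ hb₂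
    rw [← hb₁.2, ← hb₂.2, hρeq]
  have hGmem : ∀ b ∈ DK, rep v S hSrep b ∈ DD := by
    intro b hb
    have hbint := hDK_int b hb
    have h1 := rep_spec v S hSrep hbint
    rw [hDDdef, Finset.mem_filter]
    exact ⟨h1.1, rep_self v S hSrep hvmul h1.1 (rep_int v S hSrep hvmul hvadd hbint)⟩
  have hGinj : ∀ b₁ ∈ DK, ∀ b₂ ∈ DK, rep v S hSrep b₁ = rep v S hSrep b₂ → b₁ = b₂ := by
    intro b₁ hb₁ b₂ hb₂ hGeq
    have h₁ := hDK_int b₁ hb₁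
    have h₂ := hDK_int b₂ hb₂
    have hd1 : Dv v 1 (b₁ - b₂) := by
      have e1 : b₁ - b₂ = (b₁ - rep v S hSrep b₁) - (b₂ - rep v S hSrep b₂) := by
        rw [hGeq]; ring
      rw [e1]
      exact Dv_sub v hvmul hvadd (rep_spec v S hSrep h₁).2 (rep_spec v S hSrep h₂).2
    have := repk_congr v conj S' hS'rep hvmul hvadd
      (hDK_fix b₁ hb₁) (hDK_fix b₂ hb₂) h₁ h₂ hd1
    rw [hDKdef, Finset.mem_filter] at hb₁ hb₂
    rw [← hb₁.2, ← hb₂.2, this]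
  have c1 : DD.card ≤ DK.card := Finset.card_le_card_of_injOn F hFmem hFinj
  have c2 : DK.card ≤ DD.card := Finset.card_le_card_of_injOn (rep v S hSrep) hGmem hGinj
  have himg : DK.image (rep v S hSrep) = DD := by
    apply Finset.eq_of_subset_of_card_le
    · intro b hb
      rw [Finset.mem_image] at hb
      obtain ⟨e, he, rfl⟩ := hb
      exact hGmem e he
    · rw [Finset.card_image_of_injOn hGinj]
      omega
  have hρβDD : rep v S hSrep β ∈ DD := by
    have h1 := rep_spec v S hSrep hβO
    rw [hDDdef, Finset.mem_filter]
    exact ⟨h1.1, rep_self v S hSrep hvmul h1.1 (rep_int v S hSrep hvmul hvadd hβO)⟩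
  rw [← himg, Finset.mem_image] at hρβDD
  obtain ⟨e, he, hee⟩ := hρβDD
  have heint := hDK_int e he
  have hefix := hDK_fix e he
  apply hβne e hefix heint
  have e1 : β - e = (β - rep v S hSrep β) - (e - rep v S hSrep e) := by
    rw [← hee]; ring
  rw [e1]
  exact Dv_sub v hvmul hvadd (rep_spec v S hSrep hβO).2 (rep_spec v S hSrep heint).2

end theta
end S19
namespace S19
variable {k' : Type} [Field k']

def ordidx {n : ℕ} : Fin n ⊕ Fin n → ℕ := Sum.elim (fun i => (i : ℕ)) (fun j => n + j)

theorem ordidx_inj {n : ℕ} : Function.Injective (ordidx (n := n)) := by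
  rintro (i | i) (j | j) h <;> simp only [ordidx, Sum.elim_inl, Sum.elim_inr] at h
  · exact congrArg Sum.inl (Fin.ext h)
  · exact absurd h (by have := i.2; omega)
  · exact absurd h (by have := j.2; omega)
  · exact congrArg Sum.inr (Fin.ext (by omega))

/-- integral splitting `Φ = W + W*` of a hermitian matrix, using a trace-one element `θ`. -/
def W0m (conj : k' ≃+* k') (θ : k') {n : ℕ}
    (Φ : Matrix (Fin n ⊕ Fin n) (Fin n ⊕ Fin n) k') :
    Matrix (Fin n ⊕ Fin n) (Fin n ⊕ Fin n) k' :=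
  Matrix.of fun i j =>
    if ordidx j < ordidx i then Φ i j else if i = j then θ * Φ i j else 0

theorem W0m_add_ctr (conj : k' ≃+* k') (hinvol : ∀ a, conj (conj a) = a)
    {θ : k'} (hθ : θ + conj θ = 1) {n : ℕ}
    {Φ : Matrix (Fin n ⊕ Fin n) (Fin n ⊕ Fin n) k'} (hΦ : ctr conj Φ = Φ) :
    W0m conj θ Φ + ctr conj (W0m conj θ Φ) = Φ := by
  funext i j
  have hsym : ∀ a b, conj (Φ a b) = Φ b a := by
    intro a b
    have := congrFun (congrFun hΦ b) a
    simpa [ctr] using this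
  simp only [Matrix.add_apply, ctr, W0m, Matrix.of_apply]
  rcases lt_trichotomy (ordidx i) (ordidx j) with h | h | h
  · have hne : i ≠ j := fun e => by rw [e] at h; exact lt_irrefl _ h
    rw [if_neg (by omega), if_neg hne, if_pos h, zero_add, hsym]
  · have heq : i = j := ordidx_inj h
    subst heq
    rw [if_neg (lt_irrefl _), if_pos rfl, _root_.map_mul, hsym i i, ← add_mul]
    nth_rewrite 2 [← one_mul (Φ i i)]
    rw [← hθ]
  · have hne : j ≠ i := fun e => by rw [e] at h; exact lt_irrefl _ h
    rw [if_pos h, if_neg (by omega), if_neg hne, map_zero, add_zero]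

theorem W0m_val (conj : k' ≃+* k') (v : k' → ℤ) {m : ℤ} {θ : k'} (hθ : Dv v 0 θ)
    (hvmul : Hmul v) {n : ℕ} {Φ : Matrix (Fin n ⊕ Fin n) (Fin n ⊕ Fin n) k'}
    (hΦ : MDv v m Φ) : MDv v m (W0m conj θ Φ) := by
  intro i j
  simp only [W0m, Matrix.of_apply]
  by_cases h1 : ordidx j < ordidx i
  · rw [if_pos h1]; exact hΦ i j
  · rw [if_neg h1]
    by_cases h2 : i = j
    · rw [if_pos h2]
      have := Dv_mul v hvmul hθ (hΦ i j)
      simpa using this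
    · rw [if_neg h2]; exact Dv_zero v m

end S19
namespace S19
variable {k' : Type} [Field k']

set_option maxHeartbeats 1000000 in
theorem orbit_open (conj : k' ≃+* k') (hinvol : ∀ a, conj (conj a) = a)
    (v : k' → ℤ) (hvmul : Hmul v) (hvadd : Hadd v) (hvconj : ∀ a, v (conj a) = v a)
    (hcomplete : ∀ f : ℕ → k',
      (∀ m : ℕ, ∃ N : ℕ, ∀ i ≥ N, ∀ j ≥ N, f i - f j = 0 ∨ (m : ℤ) ≤ v (f i - f j)) →
      ∃ L : k', ∀ m : ℕ, ∃ N : ℕ, ∀ i ≥ N, f i - L = 0 ∨ (m : ℤ) ≤ v (f i - L))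
    {n : ℕ} (T : Matrix (Fin n) (Fin n) k') (hherm : ctr conj T = T) (hTinv : IsUnit T.det)
    {θ : k'} (hθO : Dv v 0 θ) (hθ1 : θ + conj θ = 1)
    (t : ℕ) (htT : MDv v (-(t : ℤ)) T⁻¹)
    (x y : Matrix (Fin n ⊕ Fin n) (Fin n) k')
    (hx : inXTO conj v T x) (hy : inXTO conj v T y)
    (hclose : MDv v (9 * t + 1 : ℤ) (y - x)) :
    ∃ g, inK conj v g ∧ y = g * x := by
  classical
  have ht0 : (0 : ℤ) ≤ (t : ℤ) := by positivity
  obtain ⟨hxO, hxT⟩ := hx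
  obtain ⟨hyO, hyT⟩ := hy
  have hxO' : MDv v 0 x := hxO
  have hyO' : MDv v 0 y := hyO
  set H := Hmat k' n with hHdef
  have hHH : H * H = 1 := Hmat_mul_Hmat
  have hcH : ctr conj H = H := ctr_Hmat conj
  have hMH : MDv v 0 H := MDv_Hmat v hvmul le_rfl
  set P := T⁻¹ * ctr conj x * H with hPdef
  have hPx : P * x = 1 := by
    have e1 : P * x = T⁻¹ * (ctr conj x * H * x) := by
      rw [hPdef]; simp only [Matrix.mul_assoc]
    rw [e1, hxT, Matrix.nonsing_inv_mul T hTinv]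
  set Q := x * P with hQdef
  have hQx : Q * x = x := by rw [hQdef, Matrix.mul_assoc, hPx, Matrix.mul_one]
  have hQQ : Q * Q = Q := by
    rw [hQdef, ← Matrix.mul_assoc (x * P) x P, hQx]
  set R := (1 : Matrix (Fin n ⊕ Fin n) (Fin n ⊕ Fin n) k') - Q with hRdef
  have hRx : R * x = 0 := by rw [hRdef, Matrix.sub_mul, Matrix.one_mul, hQx, sub_self]
  have hRR : R * R = R := by
    rw [hRdef]
    have e : ((1 : Matrix (Fin n ⊕ Fin n) (Fin n ⊕ Fin n) k') - Q) * (1 - Q)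
        = 1 - Q - (Q - Q * Q) := by noncomm_ring
    rw [e, hQQ, sub_self, sub_zero]
  have hQR : Q + R = 1 := by rw [hRdef]; abel
  have hcRR : ctr conj R * ctr conj R = ctr conj R := by rw [← ctr_mul, hRR]
  have hMP : MDv v (-(t : ℤ)) P := by
    have h1 := MDv_mul v hvmul hvadd (MDv_mul v hvmul hvadd htT
      (MDv_ctr v conj hvconj hxO')) hMH
    exact MDv_mono v (by omega) h1
  have hMQ : MDv v (-(t : ℤ)) Q := by
    have h1 := MDv_mul v hvmul hvadd hxO' hMP
    exact MDv_mono v (by omega) h1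
  have hMR : MDv v (-(t : ℤ)) R := by
    rw [hRdef]
    exact MDv_sub v hvmul hvadd (MDv_one v hvmul (by omega)) hMQ
  -- hermitian-ness of defect matrices
  have hΔherm : ∀ u : Matrix (Fin n ⊕ Fin n) (Fin n ⊕ Fin n) k',
      ctr conj (ctr conj u * H * u - H) = ctr conj u * H * u - H := by
    intro u
    rw [ctr_sub, ctr_mul, ctr_mul, ctr_ctr conj hinvol, hcH, ← Matrix.mul_assoc]
  have hΔx : ∀ u, u * x = y →
      ctr conj x * (ctr conj u * H * u - H) * x = 0 := by
    intro u hux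
    have e1 : ctr conj x * (ctr conj u * H * u - H) * x
        = (ctr conj x * ctr conj u) * (H * (u * x)) - ctr conj x * H * x := by
      rw [Matrix.mul_sub, Matrix.sub_mul]
      simp only [Matrix.mul_assoc]
    rw [e1, ← ctr_mul, hux, hxT]
    have e2 : ctr conj y * (H * y) = ctr conj y * H * y := by rw [Matrix.mul_assoc]
    rw [e2, hyT, sub_self]
  -- the linear solving step
  have solve : ∀ Δ : Matrix (Fin n ⊕ Fin n) (Fin n ⊕ Fin n) k',
      ctr conj Δ = Δ → ctr conj x * Δ * x = 0 →
      ∃ C : Matrix (Fin n ⊕ Fin n) (Fin n ⊕ Fin n) k',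
        C * x = 0 ∧ ctr conj C * H + H * C = -Δ ∧
        (∀ m : ℤ, MDv v m Δ → MDv v (m - 4 * t) C) := by
    intro Δ hDh hDx
    set Φ := ctr conj R * Δ * R with hΦdef
    set W := ctr conj R * W0m conj θ Φ * R with hWdef
    set M := -(ctr conj Q * Δ * R + W) with hMdef
    have hΦherm : ctr conj Φ = Φ := by
      rw [hΦdef, ctr_mul, ctr_mul, ctr_ctr conj hinvol, hDh, ← Matrix.mul_assoc]
    have hWϕ : W + ctr conj W = Φ := by
      have h1 : ctr conj W = ctr conj R * ctr conj (W0m conj θ Φ) * R := by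
        rw [hWdef, ctr_mul, ctr_mul, ctr_ctr conj hinvol, ← Matrix.mul_assoc]
      rw [hWdef, h1, ← Matrix.add_mul, ← Matrix.mul_add,
        W0m_add_ctr conj hinvol hθ1 hΦherm, hΦdef]
      calc ctr conj R * (ctr conj R * Δ * R) * R
          = (ctr conj R * ctr conj R) * Δ * (R * R) := by simp only [Matrix.mul_assoc]
        _ = ctr conj R * Δ * R := by rw [hcRR, hRR]
    refine ⟨H * M, ?_, ?_, ?_⟩
    · -- C * x = 0
      have h1 : (ctr conj Q * Δ * R) * x = 0 := by
        simp only [Matrix.mul_assoc]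
        rw [hRx]
        simp only [Matrix.mul_zero]
      have h2 : W * x = 0 := by
        rw [hWdef]
        simp only [Matrix.mul_assoc]
        rw [hRx]
        simp only [Matrix.mul_zero]
      have h3 : M * x = 0 := by
        rw [hMdef, Matrix.neg_mul, Matrix.add_mul, h1, h2, add_zero, neg_zero]
      rw [Matrix.mul_assoc, h3, Matrix.mul_zero]
    · -- unitarity defect
      have hHC : H * (H * M) = M := by rw [← Matrix.mul_assoc, hHH, Matrix.one_mul]
      have hcC : ctr conj (H * M) * H = ctr conj M := by
        rw [ctr_mul, hcH, Matrix.mul_assoc, hHH, Matrix.mul_one]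
      rw [hHC, hcC]
      have hcM : ctr conj M = -(ctr conj R * Δ * Q + ctr conj W) := by
        rw [hMdef, ctr_neg, ctr_add]
        have : ctr conj (ctr conj Q * Δ * R) = ctr conj R * Δ * Q := by
          rw [ctr_mul, ctr_mul, ctr_ctr conj hinvol, hDh, ← Matrix.mul_assoc]
        rw [this]
      have hQΔQ : ctr conj Q * Δ * Q = 0 := by
        have e : ctr conj Q * Δ * Q = ctr conj P * (ctr conj x * Δ * x) * P := by
          rw [hQdef, ctr_mul]
          simp only [Matrix.mul_assoc]
        rw [e, hDx, Matrix.mul_zero, Matrix.zero_mul]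
      have hdecomp : Δ = ctr conj Q * Δ * Q + ctr conj Q * Δ * R
          + ctr conj R * Δ * Q + ctr conj R * Δ * R := by
        have hcQR : ctr conj Q + ctr conj R = 1 := by rw [← ctr_add, hQR, ctr_one]
        calc Δ = 1 * Δ * 1 := by rw [Matrix.one_mul, Matrix.mul_one]
          _ = (ctr conj Q + ctr conj R) * Δ * (Q + R) := by rw [hcQR, hQR]
          _ = _ := by noncomm_ring
      rw [hQΔQ, zero_add] at hdecomp
      rw [hcM, hMdef]
      have e2 : -(ctr conj R * Δ * Q + ctr conj W) + -(ctr conj Q * Δ * R + W)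
          = -(ctr conj Q * Δ * R + ctr conj R * Δ * Q + (W + ctr conj W)) := by abel
      rw [e2, hWϕ, hΦdef]
      conv_rhs => rw [hdecomp]
    · -- valuation bound
      intro m hΔm
      have hMΦ : MDv v (m - 2 * t) Φ := by
        rw [hΦdef]
        have h1 := MDv_mul v hvmul hvadd (MDv_mul v hvmul hvadd
          (MDv_ctr v conj hvconj hMR) hΔm) hMR
        exact MDv_mono v (by omega) h1
      have hW0 : MDv v (m - 2 * t) (W0m conj θ Φ) := W0m_val conj v hθO hvmul hMΦ
      have hMW : MDv v (m - 4 * t) W := by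
        rw [hWdef]
        have h1 := MDv_mul v hvmul hvadd (MDv_mul v hvmul hvadd
          (MDv_ctr v conj hvconj hMR) hW0) hMR
        exact MDv_mono v (by omega) h1
      have hMA : MDv v (m - 4 * t) (ctr conj Q * Δ * R) := by
        have h1 := MDv_mul v hvmul hvadd (MDv_mul v hvmul hvadd
          (MDv_ctr v conj hvconj hMQ) hΔm) hMR
        exact MDv_mono v (by omega) h1
      have hMM : MDv v (m - 4 * t) M := by
        rw [hMdef]
        exact MDv_neg v hvmul (MDv_add v hvadd hMA hMW)
      have h2 := MDv_mul v hvmul hvadd hMH hMM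
      exact MDv_mono v (by omega) h2
  -- the correction function
  set crr : Matrix (Fin n ⊕ Fin n) (Fin n ⊕ Fin n) k' →
      Matrix (Fin n ⊕ Fin n) (Fin n ⊕ Fin n) k' := fun u =>
    if h : ctr conj x * (ctr conj u * H * u - H) * x = 0 then
      (solve (ctr conj u * H * u - H) (hΔherm u) h).choose else 0 with hcrrdef
  have hcrr_spec : ∀ u, u * x = y →
      (crr u) * x = 0 ∧
      ctr conj (crr u) * H + H * (crr u) = -(ctr conj u * H * u - H) ∧
      (∀ m : ℤ, MDv v m (ctr conj u * H * u - H) → MDv v (m - 4 * t) (crr u)) := by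
    intro u hux
    have h := hΔx u hux
    simp only [hcrrdef, dif_pos h]
    exact (solve (ctr conj u * H * u - H) (hΔherm u) h).choose_spec
  -- the Newton iteration
  set useq : ℕ → Matrix (Fin n ⊕ Fin n) (Fin n ⊕ Fin n) k' := fun k =>
    Nat.rec (1 + (y - x) * P) (fun _ u => u * (1 + crr u)) k with huseqdef
  have huseq0 : useq 0 = 1 + (y - x) * P := rfl
  have huseqS : ∀ k, useq (k + 1) = useq k * (1 + crr (useq k)) := fun k => rfl
  -- the invariant
  have inv : ∀ k, MDv v 0 (useq k) ∧ useq k * x = y ∧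
      MDv v (8 * t + 2 ^ k : ℤ) (ctr conj (useq k) * H * (useq k) - H) := by
    intro k
    induction k with
    | zero =>
      have hE : MDv v (9 * t + 1 : ℤ) (y - x) := hclose
      have hEP : MDv v (8 * t + 1 : ℤ) ((y - x) * P) := by
        have h1 := MDv_mul v hvmul hvadd hE hMP
        exact MDv_mono v (by omega) h1
      refine ⟨?_, ?_, ?_⟩
      · rw [huseq0]
        exact MDv_add v hvadd (MDv_one v hvmul le_rfl) (MDv_mono v (by omega) hEP)
      · rw [huseq0, Matrix.add_mul, Matrix.one_mul, Matrix.mul_assoc, hPx,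
          Matrix.mul_one]
        abel
      · rw [huseq0]
        have hctr : ctr conj (1 + (y - x) * P) = 1 + ctr conj ((y - x) * P) := by
          rw [ctr_add, ctr_one]
        rw [hctr]
        have e : (1 + ctr conj ((y - x) * P)) * H * (1 + (y - x) * P) - H
            = ctr conj ((y - x) * P) * H + H * ((y - x) * P)
              + ctr conj ((y - x) * P) * (H * ((y - x) * P)) := by noncomm_ring
        rw [e]
        have hcEP : MDv v (8 * t + 1 : ℤ) (ctr conj ((y - x) * P)) :=
          MDv_ctr v conj hvconj hEP
        have h1 : MDv v (8 * t + 1 : ℤ) (ctr conj ((y - x) * P) * H) := by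
          have := MDv_mul v hvmul hvadd hcEP hMH
          exact MDv_mono v (by omega) this
        have h2 : MDv v (8 * t + 1 : ℤ) (H * ((y - x) * P)) := by
          have := MDv_mul v hvmul hvadd hMH hEP
          exact MDv_mono v (by omega) this
        have h3 : MDv v (8 * t + 1 : ℤ) (ctr conj ((y - x) * P) * (H * ((y - x) * P))) := by
          have := MDv_mul v hvmul hvadd hcEP (MDv_mul v hvmul hvadd hMH hEP)
          exact MDv_mono v (by omega) this
        have := MDv_add v hvadd (MDv_add v hvadd h1 h2) h3
        exact MDv_mono v (by norm_num) this
    | succ k ih =>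
      obtain ⟨hu, hux, hΔm⟩ := ih
      obtain ⟨hCx, hCH, hCm⟩ := hcrr_spec (useq k) hux
      have h2k : (1 : ℤ) ≤ 2 ^ k := one_le_pow₀ (by norm_num)
      set C := crr (useq k) with hCdef
      have hMC : MDv v (4 * t + 2 ^ k : ℤ) C := by
        have := hCm (8 * t + 2 ^ k) hΔm
        exact MDv_mono v (by linarith) this
      have hMC0 : MDv v 0 C := MDv_mono v (by linarith) hMC
      have h1C : MDv v 0 (1 + C) :=
        MDv_add v hvadd (MDv_one v hvmul le_rfl) hMC0
      refine ⟨?_, ?_, ?_⟩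
      · rw [huseqS]
        have := MDv_mul v hvmul hvadd hu h1C
        exact MDv_mono v (by omega) this
      · rw [huseqS, Matrix.mul_assoc]
        have e : (1 + C) * x = x := by
          rw [Matrix.add_mul, Matrix.one_mul, hCx, add_zero]
        rw [e, hux]
      · rw [huseqS]
        have hctru' : ctr conj (useq k * (1 + C))
            = (1 + ctr conj C) * ctr conj (useq k) := by
          rw [ctr_mul, ctr_add, ctr_one]
        have e1 : ctr conj (useq k) * H * useq k
            = H + (ctr conj (useq k) * H * useq k - H) := by abel
        have e2 : ctr conj (useq k * (1 + C)) * H * (useq k * (1 + C))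
            = (1 + ctr conj C) * (H + (ctr conj (useq k) * H * useq k - H)) * (1 + C) := by
          rw [hctru', ← e1]
          simp only [Matrix.mul_assoc]
        set Δ := ctr conj (useq k) * H * useq k - H with hΔdef
        have key : (1 + ctr conj C) * (H + Δ) * (1 + C) - H
            - (ctr conj C * Δ + Δ * C + ctr conj C * (H * C) + ctr conj C * (Δ * C))
            = ctr conj C * H + H * C + Δ := by noncomm_ring
        have hzero : ctr conj C * H + H * C + Δ = 0 := by rw [hCH]; abel
        rw [hzero] at key
        have e3 : (1 + ctr conj C) * (H + Δ) * (1 + C) - H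
            = ctr conj C * Δ + Δ * C + ctr conj C * (H * C) + ctr conj C * (Δ * C) := by
          have := sub_eq_zero.mp key
          exact this
        rw [e2, e3]
        -- valuation bounds
        have hcC : MDv v (4 * t + 2 ^ k : ℤ) (ctr conj C) := MDv_ctr v conj hvconj hMC
        have hb1 : MDv v (8 * t + 2 ^ (k + 1) : ℤ) (ctr conj C * Δ) := by
          have := MDv_mul v hvmul hvadd hcC hΔm
          exact MDv_mono v (by rw [pow_succ]; linarith) this
        have hb2 : MDv v (8 * t + 2 ^ (k + 1) : ℤ) (Δ * C) := by
          have := MDv_mul v hvmul hvadd hΔm hMC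
          exact MDv_mono v (by rw [pow_succ]; linarith) this
        have hb3 : MDv v (8 * t + 2 ^ (k + 1) : ℤ) (ctr conj C * (H * C)) := by
          have := MDv_mul v hvmul hvadd hcC (MDv_mul v hvmul hvadd hMH hMC)
          exact MDv_mono v (by rw [pow_succ]; linarith) this
        have hb4 : MDv v (8 * t + 2 ^ (k + 1) : ℤ) (ctr conj C * (Δ * C)) := by
          have := MDv_mul v hvmul hvadd hcC (MDv_mul v hvmul hvadd hΔm hMC)
          exact MDv_mono v (by rw [pow_succ]; linarith) this
        exact MDv_add v hvadd (MDv_add v hvadd (MDv_add v hvadd hb1 hb2) hb3) hb4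
  -- Cauchy property
  have hdiff : ∀ k : ℕ, MDv v (k : ℤ) (useq (k + 1) - useq k) := by
    intro k
    obtain ⟨hu, hux, hΔm⟩ := inv k
    obtain ⟨hCx, hCH, hCm⟩ := hcrr_spec (useq k) hux
    have e : useq (k + 1) - useq k = useq k * crr (useq k) := by
      rw [huseqS, Matrix.mul_add, Matrix.mul_one]; abel
    rw [e]
    have hMC := hCm (8 * t + 2 ^ k) hΔm
    have h2k : (k : ℤ) < 2 ^ k := by
      have := (Nat.lt_two_pow_self (n := k))
      exact_mod_cast this
    have := MDv_mul v hvmul hvadd hu hMC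
    exact MDv_mono v (by linarith) this
  have haux : ∀ j d : ℕ, MDv v (j : ℤ) (useq (j + d) - useq j) := by
    intro j d
    induction d with
    | zero => rw [Nat.add_zero, sub_self]; exact MDv_zero v _
    | succ d ih =>
      have e : useq (j + (d + 1)) - useq j
          = (useq (j + d + 1) - useq (j + d)) + (useq (j + d) - useq j) := by
        have : j + (d + 1) = j + d + 1 := by omega
        rw [this]; abel
      rw [e]
      refine MDv_add v hvadd ?_ ih
      exact MDv_mono v (by push_cast; omega) (hdiff (j + d))
  have hcauchy : ∀ (m i j : ℕ), m ≤ i → m ≤ j → MDv v (m : ℤ) (useq i - useq j) := by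
    intro m i j hi hj
    rcases le_total j i with h | h
    · obtain ⟨d, rfl⟩ := Nat.exists_eq_add_of_le h
      exact MDv_mono v (by push_cast; omega) (haux j d)
    · obtain ⟨d, rfl⟩ := Nat.exists_eq_add_of_le h
      have := MDv_neg v hvmul (haux i d)
      rw [neg_sub] at this
      exact MDv_mono v (by push_cast; omega) this
  -- limits
  have hlim : ∀ a b, ∃ L : k', ∀ m : ℕ, ∃ N, ∀ i ≥ N, Dv v (m : ℤ) (useq i a b - L) := by
    intro a b
    obtain ⟨L, hL⟩ := hcomplete (fun k => useq k a b) (by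
      intro m
      refine ⟨m, fun i hi j hj => ?_⟩
      have h := hcauchy m i j hi hj a b
      simpa [Dv, Matrix.sub_apply] using h)
    exact ⟨L, fun m => (hL m).imp (fun N hN i hi => hN i hi)⟩
  choose LL hLL using hlim
  set g : Matrix (Fin n ⊕ Fin n) (Fin n ⊕ Fin n) k' :=
    Matrix.of (fun a b => LL a b) with hgdef
  have htend : ∀ m : ℕ, ∃ K, ∀ k ≥ K, MDv v (m : ℤ) (g - useq k) := by
    intro m
    choose NN hNN using (fun a b => hLL a b m)
    refine ⟨Finset.univ.sup (fun p : (Fin n ⊕ Fin n) × (Fin n ⊕ Fin n) => NN p.1 p.2),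
      fun k hk a b => ?_⟩
    have h0 : NN a b ≤ Finset.univ.sup
        (fun p : (Fin n ⊕ Fin n) × (Fin n ⊕ Fin n) => NN p.1 p.2) :=
      Finset.le_sup (f := fun p : (Fin n ⊕ Fin n) × (Fin n ⊕ Fin n) => NN p.1 p.2)
        (Finset.mem_univ (a, b))
    have h1 : NN a b ≤ k := le_trans h0 hk
    have h2 := hNN a b k h1
    have e : (g - useq k) a b = -(useq k a b - LL a b) := by
      simp [hgdef, Matrix.sub_apply]
    rw [e]
    exact Dv_neg v hvmul h2
  have hgint : MDv v 0 g := by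
    obtain ⟨K, hK⟩ := htend 0
    intro a b
    have e : g a b = useq K a b + (g - useq K) a b := by
      simp [Matrix.sub_apply]
    rw [e]
    exact Dv_add v hvadd ((inv K).1 a b) (by exact_mod_cast hK K le_rfl a b)
  have hgx : g * x = y := by
    have hz : ∀ a b, ∀ m : ℕ, Dv v (m : ℤ) ((g * x - y) a b) := by
      intro a b m
      obtain ⟨K, hK⟩ := htend m
      have h1 : g * x - y = (g - useq K) * x := by
        rw [Matrix.sub_mul, (inv K).2.1]
      rw [h1]
      have := MDv_mul v hvmul hvadd (hK K le_rfl) hxO'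
      exact MDv_mono v (by omega) this a b
    have h0 : g * x - y = 0 := by
      ext a b
      rw [Matrix.zero_apply]
      exact Dv_all v (hz a b)
    exact sub_eq_zero.mp h0
  have hgU : ctr conj g * H * g = H := by
    have hdec : ∀ u : Matrix (Fin n ⊕ Fin n) (Fin n ⊕ Fin n) k',
        ctr conj g * H * g - H = ctr conj (g - u) * (H * g)
          + ctr conj u * (H * (g - u)) + (ctr conj u * H * u - H) := by
      intro u
      rw [ctr_sub]
      noncomm_ring
    have hz : ∀ a b, ∀ m : ℕ, Dv v (m : ℤ) ((ctr conj g * H * g - H) a b) := by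
      intro a b m
      obtain ⟨K, hK⟩ := htend m
      set k := K + m with hkdef
      have hk : k ≥ K := by omega
      have hgu : MDv v (m : ℤ) (g - useq k) := hK k hk
      have h2k : (m : ℤ) ≤ 8 * t + 2 ^ k := by
        have h1 : (k : ℤ) < 2 ^ k := by exact_mod_cast (Nat.lt_two_pow_self (n := k))
        have hmk : (m : ℤ) ≤ (k : ℤ) := by
          rw [hkdef]; push_cast; omega
        linarith
      have hΔ : MDv v (m : ℤ) (ctr conj (useq k) * H * useq k - H) :=
        MDv_mono v h2k (inv k).2.2
      rw [hdec (useq k)]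
      have hb1 : MDv v (m : ℤ) (ctr conj (g - useq k) * (H * g)) := by
        have := MDv_mul v hvmul hvadd (MDv_ctr v conj hvconj hgu)
          (MDv_mul v hvmul hvadd hMH hgint)
        exact MDv_mono v (by omega) this
      have hb2 : MDv v (m : ℤ) (ctr conj (useq k) * (H * (g - useq k))) := by
        have := MDv_mul v hvmul hvadd (MDv_ctr v conj hvconj (inv k).1)
          (MDv_mul v hvmul hvadd hMH hgu)
        exact MDv_mono v (by omega) this
      exact (MDv_add v hvadd (MDv_add v hvadd hb1 hb2) hΔ) a b
    have h0 : ctr conj g * H * g - H = 0 := by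
      ext a b
      rw [Matrix.zero_apply]
      exact Dv_all v (hz a b)
    exact sub_eq_zero.mp h0
  have hHdet : H.det ≠ 0 := by
    have h1 := congrArg Matrix.det hHH
    rw [Matrix.det_mul, Matrix.det_one] at h1
    intro h
    rw [h, mul_zero] at h1
    exact zero_ne_one h1
  have hdet : IsUnit g.det := by
    have h1 := congrArg Matrix.det hgU
    rw [Matrix.det_mul, Matrix.det_mul] at h1
    have h2 : (ctr conj g).det * g.det * H.det = H.det := by
      calc (ctr conj g).det * g.det * H.det
          = (ctr conj g).det * H.det * g.det := by ring
        _ = H.det := h1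
    have h3 : (ctr conj g).det * g.det = 1 := by
      have h2' : (ctr conj g).det * g.det * H.det = 1 * H.det := by
        rw [one_mul]; exact h2
      exact mul_right_cancel₀ hHdet h2'
    exact IsUnit.of_mul_eq_one (a := g.det) (ctr conj g).det (by rw [mul_comm]; exact h3)
  exact ⟨g, ⟨hgint, hgU, hdet⟩, hgx.symm⟩

end S19
namespace S19
variable {k' : Type} [Field k']

/-- The shift map for digit expansion. -/
def shv (v : k' → ℤ) (S : Finset k')
    (hS : ∀ a : k', (a = 0 ∨ 0 ≤ v a) → ∃! b, b ∈ S ∧ (a - b = 0 ∨ 1 ≤ v (a - b)))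
    (π : k') (a : k') : k' := (a - rep v S hS a) * π⁻¹

section digits
variable (v : k' → ℤ) (S : Finset k')
variable (hS : ∀ a : k', (a = 0 ∨ 0 ≤ v a) → ∃! b, b ∈ S ∧ (a - b = 0 ∨ 1 ≤ v (a - b)))
variable (π : k')

theorem shv_int (hv0 : v 0 = 0) (hvmul : Hmul v) (hvadd : Hadd v) (hπv : v π = 1)
    {a : k'} (ha : Dv v 0 a) : Dv v 0 (shv v S hS π a) := by
  have hπ0 : π ≠ 0 := fun h => by rw [h, hv0] at hπv; exact one_ne_zero hπv.symm
  rcases (rep_spec v S hS ha).2 with h0 | h0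
  · rw [shv, h0, zero_mul]; exact Dv_zero v 0
  · right
    have hne : a - rep v S hS a ≠ 0 := by
      intro hc; rw [hc, hv0] at h0; omega
    rw [shv, hvmul _ _ hne (inv_ne_zero hπ0), v_inv v hvmul hπ0, hπv]; omega

theorem shv_decomp (hv0 : v 0 = 0) (hπv : v π = 1) (a : k') :
    a = rep v S hS a + π * shv v S hS π a := by
  have hπ0 : π ≠ 0 := fun h => by rw [h, hv0] at hπv; exact one_ne_zero hπv.symm
  rw [shv, mul_comm (a - rep v S hS a) π⁻¹, ← mul_assoc, mul_inv_cancel₀ hπ0, one_mul]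
  ring

theorem digit_sep (hv0 : v 0 = 0) (hvmul : Hmul v) (hvadd : Hadd v) (hπv : v π = 1) :
    ∀ (m : ℕ) (a b : k'), Dv v 0 a → Dv v 0 b →
    (∀ l, l < m → rep v S hS ((shv v S hS π)^[l] a) = rep v S hS ((shv v S hS π)^[l] b)) →
    Dv v (m : ℤ) (a - b) := by
  intro m
  induction m with
  | zero =>
    intro a b ha hb _
    have := Dv_sub v hvmul hvadd ha hb
    exact Dv_mono v (by omega) this
  | succ m ih =>
    intro a b ha hb hl
    have h0 : rep v S hS a = rep v S hS b := by
      have := hl 0 (by omega)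
      simpa using this
    have ha' := shv_int v S hS π hv0 hvmul hvadd hπv ha
    have hb' := shv_int v S hS π hv0 hvmul hvadd hπv hb
    have hrec := ih (shv v S hS π a) (shv v S hS π b) ha' hb' (by
      intro l hlm
      have := hl (l + 1) (by omega)
      rwa [Function.iterate_succ_apply, Function.iterate_succ_apply] at this)
    have hdec : a - b = π * (shv v S hS π a - shv v S hS π b) := by
      calc a - b = (rep v S hS a + π * shv v S hS π a)
            - (rep v S hS b + π * shv v S hS π b) := by
              rw [← shv_decomp v S hS π hv0 hπv a, ← shv_decomp v S hS π hv0 hπv b]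
        _ = (rep v S hS a - rep v S hS b) + π * (shv v S hS π a - shv v S hS π b) := by
              ring
        _ = π * (shv v S hS π a - shv v S hS π b) := by rw [h0, sub_self, zero_add]
    rw [hdec]
    have hπD : Dv v 1 π := Or.inr (le_of_eq hπv.symm)
    have := Dv_mul v hvmul hπD hrec
    exact Dv_mono v (by push_cast; omega) this

end digits
end S19
/-- `𝔛_T(O_{k'})` is a finite union of `K`-orbits. -/
theorem stmt19
    (q : ℕ) (hq : 1 < q)
    {k' : Type} [Field k'] [CharZero k']
    (conj : k' ≃+* k') (hinvol : ∀ a, conj (conj a) = a) (hconj_ne : ∃ a, conj a ≠ a)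
    (v : k' → ℤ) (hv0 : v 0 = 0)
    (hvmul : ∀ a b : k', a ≠ 0 → b ≠ 0 → v (a * b) = v a + v b)
    (hvadd : ∀ a b : k', a ≠ 0 → b ≠ 0 → a + b ≠ 0 → min (v a) (v b) ≤ v (a + b))
    (hvconj : ∀ a, v (conj a) = v a)
    (π : k') (hπk : conj π = π) (hπv : v π = 1)
    (hres : ∃ S : Finset k', S.card = q ^ 2 ∧
      ∀ a : k', (a = 0 ∨ 0 ≤ v a) → ∃! b, b ∈ S ∧ (a - b = 0 ∨ 1 ≤ v (a - b)))
    (hresk : ∃ S : Finset k', S.card = q ∧ (∀ b ∈ S, conj b = b) ∧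
      ∀ a : k', conj a = a → (a = 0 ∨ 0 ≤ v a) → ∃! b, b ∈ S ∧ (a - b = 0 ∨ 1 ≤ v (a - b)))
    (hnormu : ∀ a : k', conj a = a → a ≠ 0 → v a = 0 → ∃ u : k', u ≠ 0 ∧ conj u * u = a)
    (hcomplete : ∀ f : ℕ → k',
      (∀ m : ℕ, ∃ N : ℕ, ∀ i ≥ N, ∀ j ≥ N, f i - f j = 0 ∨ (m : ℤ) ≤ v (f i - f j)) →
      ∃ L : k', ∀ m : ℕ, ∃ N : ℕ, ∀ i ≥ N, f i - L = 0 ∨ (m : ℤ) ≤ v (f i - L))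
    (n : ℕ)
    (T : Matrix (Fin n) (Fin n) k') (hherm : ctr conj T = T) (hTinv : IsUnit T.det) :
    ∃ (r : ℕ) (xs : Fin r → Matrix (Fin n ⊕ Fin n) (Fin n) k'),
      (∀ i, inXTO conj v T (xs i)) ∧
      ∀ y : Matrix (Fin n ⊕ Fin n) (Fin n) k', inXTO conj v T y →
        ∃ (i : Fin r) (g : Matrix (Fin n ⊕ Fin n) (Fin n ⊕ Fin n) k'),
          inK conj v g ∧ y = g * xs i := by
  classical
  obtain ⟨S0, _hS0card, hS0⟩ := hres
  obtain ⟨S1, _hS1card, hS1fix, hS1⟩ := hresk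
  obtain ⟨θ, hθO, hθ1⟩ := S19.exists_theta conj v hinvol hconj_ne hv0 hvmul hvadd
    hvconj π hπk hπv ⟨S0, hS0⟩ ⟨S1, hS1fix, hS1⟩ hcomplete
  obtain ⟨t, htT⟩ : ∃ t : ℕ, S19.MDv v (-(t : ℤ)) T⁻¹ := by
    refine ⟨(Finset.univ : Finset (Fin n × Fin n)).sup
      (fun p => (v (T⁻¹ p.1 p.2)).natAbs), fun i j => ?_⟩
    rcases eq_or_ne (T⁻¹ i j) 0 with h | h
    · exact Or.inl h
    · right
      have h1 : (v (T⁻¹ i j)).natAbs ≤ (Finset.univ : Finset (Fin n × Fin n)).sup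
          (fun p => (v (T⁻¹ p.1 p.2)).natAbs) :=
        Finset.le_sup (f := fun p : Fin n × Fin n => (v (T⁻¹ p.1 p.2)).natAbs)
          (Finset.mem_univ (i, j))
      omega
  by_cases hne : ∃ z, inXTO conj v T z
  swap
  · exact ⟨0, Fin.elim0, fun i => i.elim0, fun y hy => absurd ⟨y, hy⟩ hne⟩
  obtain ⟨z0, hz0⟩ := hne
  set Nn : ℕ := 9 * t + 1 with hNndef
  -- iterated shifts of entries remain integral
  have hit_int : ∀ (a : k'), S19.Dv v 0 a → ∀ l : ℕ,
      S19.Dv v 0 ((S19.shv v S0 hS0 π)^[l] a) := by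
    intro a ha l
    induction l with
    | zero => simpa using ha
    | succ l ih =>
      rw [Function.iterate_succ_apply']
      exact S19.shv_int v S0 hS0 π hv0 hvmul hvadd hπv ih
  -- the pattern map
  set pat : {w : Matrix (Fin n ⊕ Fin n) (Fin n) k' // inXTO conj v T w} →
      (((Fin n ⊕ Fin n) × Fin n) → Fin Nn → {b : k' // b ∈ S0}) := fun w p l =>
    ⟨S19.rep v S0 hS0 ((S19.shv v S0 hS0 π)^[l.val] (w.1 p.1 p.2)),
      (S19.rep_spec v S0 hS0 (hit_int (w.1 p.1 p.2) (w.2.1 p.1 p.2) l.val)).1⟩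
    with hpatdef
  set ξ : (((Fin n ⊕ Fin n) × Fin n) → Fin Nn → {b : k' // b ∈ S0}) →
      Matrix (Fin n ⊕ Fin n) (Fin n) k' := fun c =>
    if h : ∃ w : {w : Matrix (Fin n ⊕ Fin n) (Fin n) k' // inXTO conj v T w},
        pat w = c then h.choose.1 else z0 with hξdef
  have hξX : ∀ c, inXTO conj v T (ξ c) := by
    intro c
    rw [hξdef]
    by_cases h : ∃ w : {w : Matrix (Fin n ⊕ Fin n) (Fin n) k' // inXTO conj v T w},
        pat w = c
    · simp only [dif_pos h]; exact h.choose.2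
    · simp only [dif_neg h]; exact hz0
  set e := Fintype.equivFin (((Fin n ⊕ Fin n) × Fin n) → Fin Nn → {b : k' // b ∈ S0})
    with hedef
  refine ⟨Fintype.card (((Fin n ⊕ Fin n) × Fin n) → Fin Nn → {b : k' // b ∈ S0}),
    fun i => ξ (e.symm i), fun i => hξX _, ?_⟩
  intro y hy
  set c := pat ⟨y, hy⟩ with hcdef
  have hex : ∃ w : {w : Matrix (Fin n ⊕ Fin n) (Fin n) k' // inXTO conj v T w},
      pat w = c := ⟨⟨y, hy⟩, rfl⟩
  have hξc : ξ c = hex.choose.1 := by rw [hξdef]; simp only [dif_pos hex]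
  set x : Matrix (Fin n ⊕ Fin n) (Fin n) k' := hex.choose.1 with hxdef
  have hxX : inXTO conj v T x := hex.choose.2
  have hpatx : pat hex.choose = c := hex.choose_spec
  -- pattern equality entrywise
  have hrepeq : ∀ (p : (Fin n ⊕ Fin n)) (pq : Fin n) (l : ℕ), l < Nn →
      S19.rep v S0 hS0 ((S19.shv v S0 hS0 π)^[l] (y p pq))
        = S19.rep v S0 hS0 ((S19.shv v S0 hS0 π)^[l] (x p pq)) := by
    intro p pq l hl
    have h0 : pat hex.choose = pat ⟨y, hy⟩ := hpatx.trans hcdef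
    have h1 := congrFun (congrFun h0 (p, pq)) (⟨l, hl⟩ : Fin Nn)
    have h2 := congrArg Subtype.val h1
    simp only [hpatdef] at h2
    exact h2.symm
  have hclose : S19.MDv v (9 * t + 1 : ℤ) (y - x) := by
    intro p pq
    have h := S19.digit_sep v S0 hS0 π hv0 hvmul hvadd hπv Nn (y p pq) (x p pq)
      (hy.1 p pq) (hxX.1 p pq) (fun l hl => hrepeq p pq l hl)
    have e1 : (y - x) p pq = y p pq - x p pq := by simp [Matrix.sub_apply]
    rw [e1]
    exact S19.Dv_mono v (by rw [hNndef]; push_cast; omega) h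
  obtain ⟨g, hgK, hgy⟩ := S19.orbit_open conj hinvol v hvmul hvadd hvconj hcomplete
    T hherm hTinv hθO hθ1 t htT x y hxX hy hclose
  refine ⟨e c, g, hgK, ?_⟩
  show y = g * ξ (e.symm (e c))
  have hxs : ξ (e.symm (e c)) = x := by rw [Equiv.symm_apply_apply, hξc]
  rw [hxs]
  exact hgy
end
end
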